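/- arXiv:2110.10676 — 7 statements merged into one kernel-verified Lean document; each statement's English description precedes it below -/
import Mathlib

section
/- Let X be a finite connected poset, F a field, and φ a Jordan automorphism of I(X,F) (a bijective F-linear map with φ(f²) = φ(f)² and φ(fgf) = φ(f)φ(g)φ(f) for all f, g) such that φ(e_x) = e_{λ(x)} for some bijection λ: X → X. Then λ is either an order automorphism of X (λ and λ⁻¹ are order-preserving) or an order anti-automorphism of X (λ and λ⁻¹ are order-reversing). -/
set_option linter.unusedSectionVars false


open IncidenceAlgebra

/-- A poset is connected if any two elements can be joined by a sequence of elements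
in which consecutive elements are comparable. -/
def PosetConnected (X : Type*) [PartialOrder X] : Prop :=
  ∀ x y : X, Relation.ReflTransGen (fun a b : X => a ≤ b ∨ b ≤ a) x y

/-- The standard basis element `e_{xy}` of the incidence algebra (for `x ≤ y`):
the function taking value `1` at `(x, y)` and `0` elsewhere. -/
def eSingle {R : Type*} [Zero R] [One R] {X : Type*} [PartialOrder X] [DecidableEq X]
    (x y : X) (hxy : x ≤ y) : IncidenceAlgebra R X where
  toFun u v := if u = x ∧ v = y then 1 else 0
  eq_zero_of_not_le' u v huv := by
    show (if u = x ∧ v = y then (1 : R) else 0) = 0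
    split_ifs with hc
    · obtain ⟨rfl, rfl⟩ := hc; exact absurd hxy huv
    · rfl


section Aux
variable {F : Type*} [Field F] {X : Type*} [PartialOrder X] [LocallyFiniteOrder X] [DecidableEq X]

lemma eSingle_apply (x y : X) (h : x ≤ y) (u v : X) :
    eSingle (R := F) x y h u v = if u = x ∧ v = y then 1 else 0 := rfl

lemma eSingle_mul_eSingle_of_eq {a b c d : X} (hab : a ≤ b) (hcd : c ≤ d) (h : b = c) :
    eSingle (R := F) a b hab * eSingle c d hcd = eSingle a d (hab.trans (h ▸ hcd)) := by
  subst h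
  ext u v huv
  rw [mul_apply, eSingle_apply]
  rcases eq_or_ne u a with rfl | hu
  · rcases eq_or_ne v d with rfl | hv
    · rw [if_pos ⟨rfl, rfl⟩, Finset.sum_eq_single b]
      · simp [eSingle_apply]
      · intro z hz hzb
        simp [eSingle_apply, hzb]
      · intro hb
        exact absurd (Finset.mem_Icc.2 ⟨hab, hcd⟩) hb
    · rw [if_neg (by simp [hv])]
      exact Finset.sum_eq_zero fun z hz => by simp [eSingle_apply, hv]
  · rw [if_neg (by simp [hu])]
    exact Finset.sum_eq_zero fun z hz => by simp [eSingle_apply, hu]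

lemma eSingle_mul_eSingle_of_ne {a b c d : X} (hab : a ≤ b) (hcd : c ≤ d) (h : b ≠ c) :
    eSingle (R := F) a b hab * eSingle c d hcd = 0 := by
  ext u v huv
  rw [mul_apply, IncidenceAlgebra.zero_apply]
  exact Finset.sum_eq_zero fun z hz => by
    rcases eq_or_ne z b with rfl | hzb
    · simp [eSingle_apply, h]
    · simp [eSingle_apply, hzb]

lemma diag_mul_apply (a : X) (g : IncidenceAlgebra F X) (u v : X) :
    (eSingle (R := F) a a le_rfl * g) u v = if u = a then g u v else 0 := by
  rw [mul_apply]
  by_cases hu : u = a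
  · subst hu
    rw [if_pos rfl]
    by_cases hav : u ≤ v
    · rw [Finset.sum_eq_single u]
      · simp [eSingle_apply]
      · intro z hz hza; simp [eSingle_apply, hza]
      · intro hb; exact absurd (Finset.mem_Icc.2 ⟨le_rfl, hav⟩) hb
    · rw [apply_eq_zero_of_not_le hav g]
      exact Finset.sum_eq_zero fun z hz => by
        rw [Finset.mem_Icc] at hz
        rw [eSingle_apply, if_neg (fun hc : u = u ∧ z = u => hav (hc.2 ▸ hz.2)), zero_mul]
  · rw [if_neg hu]
    exact Finset.sum_eq_zero fun z hz => by simp [eSingle_apply, hu]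

lemma mul_diag_apply (a : X) (g : IncidenceAlgebra F X) (u v : X) :
    (g * eSingle (R := F) a a le_rfl) u v = if v = a then g u v else 0 := by
  rw [mul_apply]
  by_cases hv : v = a
  · subst hv
    rw [if_pos rfl]
    by_cases hua : u ≤ v
    · rw [Finset.sum_eq_single v]
      · simp [eSingle_apply]
      · intro z hz hza; simp [eSingle_apply, hza]
      · intro hb; exact absurd (Finset.mem_Icc.2 ⟨hua, le_rfl⟩) hb
    · rw [apply_eq_zero_of_not_le hua g]
      exact Finset.sum_eq_zero fun z hz => by
        rw [Finset.mem_Icc] at hz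
        rw [eSingle_apply, if_neg (fun hc : z = v ∧ v = v => hua (hc.1 ▸ hz.1)), mul_zero]
  · rw [if_neg hv]
    exact Finset.sum_eq_zero fun z hz => by simp [eSingle_apply, hv]

lemma eSingle_ne_zero (x y : X) (h : x ≤ y) : eSingle (R := F) x y h ≠ 0 := by
  intro h0
  have : eSingle (R := F) x y h x y = 0 := by rw [h0]; rfl
  rw [eSingle_apply, if_pos ⟨rfl, rfl⟩] at this
  exact one_ne_zero this

lemma ia_congr {f g : IncidenceAlgebra F X} (h : f = g) (a b : X) : f a b = g a b := by rw [h]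

end Aux


section Main
variable {X : Type*} [PartialOrder X] [Fintype X] [LocallyFiniteOrder X] [DecidableEq X]
  {F : Type*} [Field F]

lemma ia_add_sq (f g : IncidenceAlgebra F X) :
    (f + g) * (f + g) = (f * f + f * g) + (g * f + g * g) := by
  rw [add_mul, mul_add, mul_add]

lemma smul_single_mul_smul_single (c d : F) {a b a' b' : X} (h1 : a ≤ b) (h2 : a' ≤ b') :
    (c • eSingle (R := F) a b h1) * (d • eSingle a' b' h2) =
      if h : b = a' then (c * d) • eSingle a b' (h1.trans (h ▸ h2)) else 0 := by
  rw [smul_mul_assoc, mul_smul_comm, smul_smul]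
  split_ifs with h
  · rw [eSingle_mul_eSingle_of_eq h1 h2 h]
  · rw [eSingle_mul_eSingle_of_ne h1 h2 h, smul_zero]

lemma chain_sq {u x y : X} (hux : u < x) (hxy : x < y) :
    (eSingle (R := F) u x hux.le + eSingle x y hxy.le) *
      (eSingle u x hux.le + eSingle x y hxy.le) = eSingle u y (hux.le.trans hxy.le) := by
  rw [ia_add_sq, eSingle_mul_eSingle_of_ne hux.le hux.le hux.ne',
    eSingle_mul_eSingle_of_eq hux.le hxy.le rfl,
    eSingle_mul_eSingle_of_ne hxy.le hux.le (hux.trans hxy).ne',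
    eSingle_mul_eSingle_of_ne hxy.le hxy.le hxy.ne']
  simp only [zero_add, add_zero]

lemma zero_sq {x1 y1 x2 y2 : X} (h1 : x1 < y1) (h2 : x2 < y2) (ha : y1 ≠ x2) (hb : y2 ≠ x1) :
    (eSingle (R := F) x1 y1 h1.le + eSingle x2 y2 h2.le) *
      (eSingle x1 y1 h1.le + eSingle x2 y2 h2.le) = 0 := by
  rw [ia_add_sq, eSingle_mul_eSingle_of_ne h1.le h1.le h1.ne',
    eSingle_mul_eSingle_of_ne h1.le h2.le ha,
    eSingle_mul_eSingle_of_ne h2.le h1.le hb,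
    eSingle_mul_eSingle_of_ne h2.le h2.le h2.ne']
  simp only [add_zero]

lemma lemA (φ : IncidenceAlgebra F X →ₗ[F] IncidenceAlgebra F X)
    (hinj : Function.Injective φ)
    (htriple : ∀ f g : IncidenceAlgebra F X, φ (f * g * f) = φ f * φ g * φ f)
    (l : X ≃ X)
    (hl : ∀ x : X, φ (eSingle x x le_rfl) = eSingle (l x) (l x) le_rfl)
    {x y : X} (hxy : x < y) :
    (∃ h : l x < l y, ∃ c : F, c ≠ 0 ∧ φ (eSingle x y hxy.le) = c • eSingle (l x) (l y) h.le) ∨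
    (∃ h : l y < l x, ∃ c : F, c ≠ 0 ∧ φ (eSingle x y hxy.le) = c • eSingle (l y) (l x) h.le) := by
  set g := φ (eSingle x y hxy.le) with hg
  have hne : l x ≠ l y := fun h => hxy.ne (l.injective h)
  have hls : (eSingle x x le_rfl + eSingle y y le_rfl) * eSingle (R := F) x y hxy.le *
      (eSingle x x le_rfl + eSingle y y le_rfl) = eSingle x y hxy.le := by
    rw [add_mul, eSingle_mul_eSingle_of_eq le_rfl hxy.le rfl,
      eSingle_mul_eSingle_of_ne le_rfl hxy.le hxy.ne', add_zero, mul_add,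
      eSingle_mul_eSingle_of_ne hxy.le le_rfl hxy.ne',
      eSingle_mul_eSingle_of_eq hxy.le le_rfl rfl, zero_add]
  have h1 : g = (eSingle (R := F) (l x) (l x) le_rfl + eSingle (l y) (l y) le_rfl) * g *
      (eSingle (R := F) (l x) (l x) le_rfl + eSingle (l y) (l y) le_rfl) := by
    conv_lhs => rw [hg, ← hls, htriple]
    rw [map_add, hl, hl, ← hg]
  have hdx : g (l x) (l x) = 0 := by
    have h2 := htriple (eSingle x x le_rfl) (eSingle x y hxy.le)
    rw [eSingle_mul_eSingle_of_eq le_rfl hxy.le rfl,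
      eSingle_mul_eSingle_of_ne hxy.le le_rfl hxy.ne', map_zero, hl, ← hg] at h2
    have h4 := ia_congr h2.symm (l x) (l x)
    rw [mul_diag_apply, if_pos rfl, diag_mul_apply, if_pos rfl] at h4
    exact h4
  have hdy : g (l y) (l y) = 0 := by
    have h2 := htriple (eSingle y y le_rfl) (eSingle x y hxy.le)
    rw [eSingle_mul_eSingle_of_ne le_rfl hxy.le hxy.ne', zero_mul, map_zero, hl, ← hg] at h2
    have h4 := ia_congr h2.symm (l y) (l y)
    rw [mul_diag_apply, if_pos rfl, diag_mul_apply, if_pos rfl] at h4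
    exact h4
  have hsupp : ∀ u v : X, g u v ≠ 0 → (u = l x ∧ v = l y) ∨ (u = l y ∧ v = l x) := by
    intro u v hguv
    have h3 := ia_congr h1 u v
    simp only [mul_add, add_mul, IncidenceAlgebra.add_apply, mul_diag_apply, diag_mul_apply] at h3
    by_cases hva : v = l x
    · by_cases hub : u = l y
      · exact Or.inr ⟨hub, hva⟩
      · exfalso
        by_cases hua : u = l x
        · exact hguv (by rw [hua, hva]; exact hdx)
        · apply hguv
          simp only [hva, hua, hub, hne, Ne.symm hne, if_true, if_false, add_zero, zero_add,
            ite_eq_right_iff, if_neg, eq_self_iff_true] at h3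
          simpa [hva, hua, hub, Ne.symm hne] using h3
    · by_cases hvb : v = l y
      · by_cases hua : u = l x
        · exact Or.inl ⟨hua, hvb⟩
        · exfalso
          by_cases hub : u = l y
          · exact hguv (by rw [hub, hvb]; exact hdy)
          · apply hguv
            simpa [hva, hvb, hua, hub] using h3
      · exact absurd (by simpa [hva, hvb] using h3) hguv
  have hg0 : g ≠ 0 := fun h0 =>
    eSingle_ne_zero x y hxy.le (hinj (h0.trans (map_zero φ).symm))
  have hex : ∃ u v, g u v ≠ 0 := by
    by_contra hc
    push_neg at hc
    exact hg0 (by ext u v huv; rw [hc, IncidenceAlgebra.zero_apply])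
  obtain ⟨u, v, huv⟩ := hex
  rcases hsupp u v huv with ⟨rfl, rfl⟩ | ⟨rfl, rfl⟩
  · have hle : l x ≤ l y := le_of_ne_zero huv
    have hlt : l x < l y := hle.lt_of_ne hne
    refine Or.inl ⟨hlt, g (l x) (l y), huv, ?_⟩
    ext u' v' hle'
    rw [constSMul_apply, eSingle_apply, smul_eq_mul]
    by_cases hc : u' = l x ∧ v' = l y
    · obtain ⟨rfl, rfl⟩ := hc
      rw [if_pos ⟨rfl, rfl⟩, mul_one]
    · rw [if_neg hc, mul_zero]
      by_contra h'
      rcases hsupp u' v' h' with ⟨rfl, rfl⟩ | ⟨rfl, rfl⟩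
      · exact hc ⟨rfl, rfl⟩
      · exact hlt.not_ge hle'
  · have hle : l y ≤ l x := le_of_ne_zero huv
    have hlt : l y < l x := hle.lt_of_ne (Ne.symm hne)
    refine Or.inr ⟨hlt, g (l y) (l x), huv, ?_⟩
    ext u' v' hle'
    rw [constSMul_apply, eSingle_apply, smul_eq_mul]
    by_cases hc : u' = l y ∧ v' = l x
    · obtain ⟨rfl, rfl⟩ := hc
      rw [if_pos ⟨rfl, rfl⟩, mul_one]
    · rw [if_neg hc, mul_zero]
      by_contra h'
      rcases hsupp u' v' h' with ⟨rfl, rfl⟩ | ⟨rfl, rfl⟩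
      · exact hlt.not_ge hle'
      · exact hc ⟨rfl, rfl⟩

lemma chain_contra (φ : IncidenceAlgebra F X →ₗ[F] IncidenceAlgebra F X)
    (hinj : Function.Injective φ)
    (hsq : ∀ f : IncidenceAlgebra F X, φ (f * f) = φ f * φ f)
    {u x y : X} (hux : u < x) (hxy : x < y) {a b a' b' : X} (hab : a ≤ b) (hab' : a' ≤ b')
    (c d : F)
    (hA : φ (eSingle u x hux.le) = c • eSingle a b hab)
    (hB : φ (eSingle x y hxy.le) = d • eSingle a' b' hab')
    (n1 : b ≠ a) (n2 : b ≠ a') (n3 : b' ≠ a) (n4 : b' ≠ a') : False := by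
  have hf := hsq (eSingle u x hux.le + eSingle x y hxy.le)
  rw [chain_sq hux hxy, map_add, hA, hB, ia_add_sq,
    smul_single_mul_smul_single, smul_single_mul_smul_single,
    smul_single_mul_smul_single, smul_single_mul_smul_single,
    dif_neg n1, dif_neg n2, dif_neg n3, dif_neg n4] at hf
  simp only [add_zero] at hf
  exact eSingle_ne_zero u y _ (hinj (hf.trans (map_zero φ).symm))

lemma fork_contra (φ : IncidenceAlgebra F X →ₗ[F] IncidenceAlgebra F X)
    (hsq : ∀ f : IncidenceAlgebra F X, φ (f * f) = φ f * φ f)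
    {x1 y1 x2 y2 : X} (h1 : x1 < y1) (h2 : x2 < y2)
    (ha : y1 ≠ x2) (hb : y2 ≠ x1)
    {a b b' : X} (hab : a ≤ b) (hbb' : b ≤ b') {c d : F} (hc : c ≠ 0) (hd : d ≠ 0)
    (hA : φ (eSingle x1 y1 h1.le) = c • eSingle a b hab)
    (hB : φ (eSingle x2 y2 h2.le) = d • eSingle b b' hbb')
    (n1 : b ≠ a) (n3 : b' ≠ a) (n4 : b' ≠ b) : False := by
  have hf := hsq (eSingle x1 y1 h1.le + eSingle x2 y2 h2.le)
  rw [zero_sq h1 h2 ha hb, map_zero, map_add, hA, hB, ia_add_sq,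
    smul_single_mul_smul_single, smul_single_mul_smul_single,
    smul_single_mul_smul_single, smul_single_mul_smul_single,
    dif_neg n1, dif_pos rfl, dif_neg n3, dif_neg n4] at hf
  simp only [zero_add, add_zero] at hf
  rcases smul_eq_zero.mp hf.symm with h0 | h0
  · exact (mul_ne_zero hc hd) h0
  · exact eSingle_ne_zero _ _ _ h0

lemma finv (l : X ≃ X) (h : ∀ x y : X, x < y → l x < l y) {x y : X} (hxy : x < y) :
    l.symm x < l.symm y := by
  classical
  set s : Finset (X × X) := Finset.univ.filter (fun p => p.1 < p.2) with hs
  have hmem : (x, y) ∈ s := by simp [hs, hxy]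
  obtain ⟨p, hp, hep⟩ := Finset.surj_on_of_inj_on_of_card_le (s := s) (t := s)
    (fun p _ => (l p.1, l p.2))
    (fun p hp => by
      simp only [hs, Finset.mem_filter, Finset.mem_univ, true_and] at hp ⊢
      exact h _ _ hp)
    (fun p q hp hq hpq => by
      obtain ⟨h1, h2⟩ := Prod.ext_iff.mp hpq
      exact Prod.ext (l.injective h1) (l.injective h2))
    le_rfl (x, y) hmem
  simp only [Prod.mk.injEq] at hep
  obtain ⟨hx1, hy1⟩ := hep
  have hps : p.1 < p.2 := by simpa [hs] using hp
  rw [show l.symm x = p.1 by rw [hx1]; exact l.symm_apply_apply _,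
    show l.symm y = p.2 by rw [hy1]; exact l.symm_apply_apply _]
  exact hps

lemma finv_anti (l : X ≃ X) (h : ∀ x y : X, x < y → l y < l x) {x y : X} (hxy : x < y) :
    l.symm y < l.symm x := by
  classical
  set s : Finset (X × X) := Finset.univ.filter (fun p => p.1 < p.2) with hs
  have hmem : (x, y) ∈ s := by simp [hs, hxy]
  obtain ⟨p, hp, hep⟩ := Finset.surj_on_of_inj_on_of_card_le (s := s) (t := s)
    (fun p _ => (l p.2, l p.1))
    (fun p hp => by
      simp only [hs, Finset.mem_filter, Finset.mem_univ, true_and] at hp ⊢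
      exact h _ _ hp)
    (fun p q hp hq hpq => by
      obtain ⟨h1, h2⟩ := Prod.ext_iff.mp hpq
      exact Prod.ext (l.injective h2) (l.injective h1))
    le_rfl (x, y) hmem
  simp only [Prod.mk.injEq] at hep
  obtain ⟨hx1, hy1⟩ := hep
  have hps : p.1 < p.2 := by simpa [hs] using hp
  rw [show l.symm x = p.2 by rw [hx1]; exact l.symm_apply_apply _,
    show l.symm y = p.1 by rw [hy1]; exact l.symm_apply_apply _]
  exact hps

end Main


/-- if a Jordan automorphism `φ` of the incidence algebra of a finite connected
poset satisfies `φ(e_x) = e_{λ(x)}` for a bijection `λ`, then `λ` is an order automorphism or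
an order anti-automorphism of `X`. -/
theorem stmt_7 {X : Type*} [PartialOrder X] [Fintype X] [LocallyFiniteOrder X] [DecidableEq X]
    {F : Type*} [Field F]
    (hconn : PosetConnected X)
    (φ : IncidenceAlgebra F X →ₗ[F] IncidenceAlgebra F X)
    (hbij : Function.Bijective φ)
    (hsq : ∀ f : IncidenceAlgebra F X, φ (f * f) = φ f * φ f)
    (htriple : ∀ f g : IncidenceAlgebra F X, φ (f * g * f) = φ f * φ g * φ f)
    (l : X ≃ X)
    (hl : ∀ x : X, φ (eSingle x x le_rfl) = eSingle (l x) (l x) le_rfl) :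
    ((∀ x y : X, x ≤ y → l x ≤ l y) ∧ (∀ x y : X, x ≤ y → l.symm x ≤ l.symm y)) ∨
      ((∀ x y : X, x ≤ y → l y ≤ l x) ∧ (∀ x y : X, x ≤ y → l.symm y ≤ l.symm x)) := by
  have hinj := hbij.1
  have key : ∀ {x y : X} (h : x < y),
      (∃ h' : l x < l y, ∃ c : F, c ≠ 0 ∧
        φ (eSingle x y h.le) = c • eSingle (l x) (l y) h'.le) ∨
      (∃ h' : l y < l x, ∃ c : F, c ≠ 0 ∧
        φ (eSingle x y h.le) = c • eSingle (l y) (l x) h'.le) :=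
    fun h => lemA φ hinj htriple l hl h
  have dir : ∀ {x y : X}, x < y → l x < l y ∨ l y < l x := fun h =>
    (key h).elim (fun ⟨h1, _⟩ => Or.inl h1) fun ⟨h1, _⟩ => Or.inr h1
  have getPos : ∀ {x y : X} (h : x < y) (hlt : l x < l y),
      ∃ c : F, c ≠ 0 ∧ φ (eSingle x y h.le) = c • eSingle (l x) (l y) hlt.le := by
    intro x y h hlt
    rcases key h with ⟨h1, c, hc, he⟩ | ⟨h1, _, _, _⟩
    · exact ⟨c, hc, he⟩
    · exact absurd hlt (lt_asymm h1)
  have getNeg : ∀ {x y : X} (h : x < y) (hlt : l y < l x),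
      ∃ c : F, c ≠ 0 ∧ φ (eSingle x y h.le) = c • eSingle (l y) (l x) hlt.le := by
    intro x y h hlt
    rcases key h with ⟨h1, _, _, _⟩ | ⟨h1, c, hc, he⟩
    · exact absurd hlt (lt_asymm h1)
    · exact ⟨c, hc, he⟩
  have chainMix : ∀ {u x y : X}, u < x → x < y → l u < l x → l y < l x → False := by
    intro u x y hux hxy h1 h2
    obtain ⟨c, hc, hA⟩ := getPos hux h1
    obtain ⟨d, hd, hB⟩ := getNeg hxy h2
    exact chain_contra φ hinj hsq hux hxy h1.le h2.le c d hA hB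
      h1.ne' h2.ne' h1.ne' h2.ne'
  have chainMix' : ∀ {u x y : X}, u < x → x < y → l x < l u → l x < l y → False := by
    intro u x y hux hxy h1 h2
    obtain ⟨c, hc, hA⟩ := getNeg hux h1
    obtain ⟨d, hd, hB⟩ := getPos hxy h2
    exact chain_contra φ hinj hsq hux hxy h1.le h2.le c d hA hB
      h1.ne' h1.ne' h2.ne' h2.ne'
  have forkMix : ∀ {x y z : X}, x < y → x < z → y ≠ z → l x < l y → l z < l x → False := by
    intro x y z hxy hxz hyz h1 h2
    obtain ⟨c, hc, hB⟩ := getPos hxy h1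
    obtain ⟨d, hd, hA⟩ := getNeg hxz h2
    exact fork_contra φ hsq hxz hxy hxz.ne' hxy.ne' h2.le h1.le hd hc hA hB
      h2.ne' (fun h => hyz (l.injective h)) h1.ne'
  have coforkMix : ∀ {x y z : X}, y < x → z < x → y ≠ z → l y < l x → l x < l z → False := by
    intro x y z hyx hzx hyz h1 h2
    obtain ⟨c, hc, hA⟩ := getPos hyx h1
    obtain ⟨d, hd, hB⟩ := getNeg hzx h2
    exact fork_contra φ hsq hyx hzx hzx.ne' hyx.ne' h1.le h2.le hc hd hA hB
      h1.ne' (fun h => hyz (l.injective h).symm) h2.ne'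
  have C1 : ∀ x y u v : X, x < y → u < v → (x = u ∨ x = v ∨ y = u ∨ y = v) →
      l x < l y → l u < l v := by
    intro x y u v hxy huv hshare h
    rcases dir huv with h' | h'
    · exact h'
    · exfalso
      rcases hshare with rfl | rfl | rfl | rfl
      · by_cases hyv : y = v
        · subst hyv; exact lt_asymm h h'
        · exact forkMix hxy huv hyv h h'
      · exact chainMix' huv hxy h' h
      · exact chainMix hxy huv h h'
      · by_cases hxu : x = u
        · subst hxu; exact lt_asymm h h'
        · exact coforkMix hxy huv hxu h h'
  have C : ∀ x y u v : X, x < y → u < v → (x = u ∨ x = v ∨ y = u ∨ y = v) →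
      (l x < l y ↔ l u < l v) := by
    intro x y u v h1 h2 hs
    refine ⟨C1 _ _ _ _ h1 h2 hs, C1 _ _ _ _ h2 h1 ?_⟩
    rcases hs with h | h | h | h <;> simp [h]
  have D : ∀ a b : X, Relation.ReflTransGen (fun p q : X => p ≤ q ∨ q ≤ p) a b →
      ∀ x y u v : X, x < y → u < v → (x = a ∨ y = a) → (u = b ∨ v = b) →
      (l x < l y ↔ l u < l v) := by
    intro a b hab
    induction hab with
    | refl =>
      intro x y u v hxy huv hxa hub
      refine C x y u v hxy huv ?_
      rcases hxa with rfl | rfl <;> rcases hub with h | h <;> tauto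
    | @tail b' c hab hbc ih =>
      intro x y u v hxy huv hxa hub
      rcases hbc with h | h
      · rcases lt_or_eq_of_le h with hlt | heq
        · refine (ih x y b' c hxy hlt hxa (Or.inl rfl)).trans
            (C b' c u v hlt huv ?_)
          rcases hub with rfl | rfl <;> tauto
        · subst heq; exact ih x y u v hxy huv hxa hub
      · rcases lt_or_eq_of_le h with hlt | heq
        · refine (ih x y c b' hxy hlt hxa (Or.inr rfl)).trans
            (C c b' u v hlt huv ?_)
          rcases hub with rfl | rfl <;> tauto
        · rw [heq] at hub
          exact ih x y u v hxy huv hxa hub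
  by_cases hstrict : ∃ p q : X, p < q
  · obtain ⟨p, q, hpq⟩ := hstrict
    rcases dir hpq with hd | hd
    · left
      have mono : ∀ x y : X, x < y → l x < l y := fun x y h =>
        (D p x (hconn p x) p q x y hpq h (Or.inl rfl) (Or.inl rfl)).mp hd
      refine ⟨fun x y h => ?_, fun x y h => ?_⟩
      · rcases h.lt_or_eq with h' | rfl
        · exact (mono x y h').le
        · exact le_rfl
      · rcases h.lt_or_eq with h' | rfl
        · exact (finv l mono h').le
        · exact le_rfl
    · right
      have anti : ∀ x y : X, x < y → l y < l x := by
        intro x y h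
        rcases dir h with h' | h'
        · exact absurd ((D p x (hconn p x) p q x y hpq h (Or.inl rfl) (Or.inl rfl)).mpr h')
            (lt_asymm hd)
        · exact h'
      refine ⟨fun x y h => ?_, fun x y h => ?_⟩
      · rcases h.lt_or_eq with h' | rfl
        · exact (anti x y h').le
        · exact le_rfl
      · rcases h.lt_or_eq with h' | rfl
        · exact (finv_anti l anti h').le
        · exact le_rfl
  · push_neg at hstrict
    left
    constructor <;> intro x y h <;> rcases h.lt_or_eq with h' | rfl
    · exact absurd h' (hstrict x y)
    · exact le_rfl
    · exact absurd h' (hstrict x y)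
    · exact le_rfl
end

section
/- Let X be a locally finite poset, R a commutative unital ring, and α₁, …, α_n a finite family of pairwise commuting idempotents of I(X,R). Then there exists an invertible element β ∈ I(X,R) such that α_i = β (α_i)_D β⁻¹ for all 1 ≤ i ≤ n, where (α_i)_D denotes the diagonal of α_i. -/
open IncidenceAlgebra

/-- The diagonal part `f_D` of an element of the incidence algebra. -/
def diagPart {R : Type*} [Zero R] {X : Type*} [PartialOrder X] [DecidableEq X]
    (f : IncidenceAlgebra R X) : IncidenceAlgebra R X where
  toFun u v := if u = v then f u v else 0
  eq_zero_of_not_le' u v huv := by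
    show (if u = v then f u v else 0) = 0
    exact if_neg fun h => huv (le_of_eq h)

namespace Stmt9Aux

open Finset

variable {X : Type*} [PartialOrder X] [LocallyFiniteOrder X] [DecidableEq X]
  {R : Type*} [CommRing R]

@[simp] lemma diagPart_apply (f : IncidenceAlgebra R X) (a b : X) :
    diagPart f a b = if a = b then f a b else 0 := rfl

lemma diagPart_one : diagPart (1 : IncidenceAlgebra R X) = 1 := by
  ext a b _
  simp only [diagPart_apply, IncidenceAlgebra.one_apply]
  split <;> simp_all

lemma diagPart_mul (f g : IncidenceAlgebra R X) :
    diagPart (f * g) = diagPart f * diagPart g := by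
  ext a b hab
  simp only [diagPart_apply, IncidenceAlgebra.mul_apply]
  by_cases h : a = b
  · subst h
    simp [Icc_self]
  · rw [if_neg h]
    refine (Finset.sum_eq_zero fun x hx => ?_).symm
    by_cases hax : a = x
    · subst hax
      rw [if_neg (fun hxb => h hxb), mul_zero]
    · rw [if_neg hax, zero_mul]

lemma diagPart_comm (f g : IncidenceAlgebra R X) :
    diagPart f * diagPart g = diagPart g * diagPart f := by
  ext a b hab
  simp only [IncidenceAlgebra.mul_apply]
  refine Finset.sum_congr rfl fun x hx => ?_
  simp only [diagPart_apply]
  by_cases hax : a = x <;> by_cases hxb : x = b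
  · subst hax; subst hxb; simp [mul_comm]
  · simp [hax, hxb]
  · subst hxb; simp [hax]
  · simp [hax]

lemma diagPart_diagPart (f : IncidenceAlgebra R X) :
    diagPart (diagPart f) = diagPart f := by
  ext a b _
  simp only [diagPart_apply]
  split <;> simp_all

lemma diagPart_sub (f g : IncidenceAlgebra R X) :
    diagPart (f - g) = diagPart f - diagPart g := by
  ext a b _
  simp only [diagPart_apply, IncidenceAlgebra.sub_apply]
  split <;> simp

lemma diagPart_add (f g : IncidenceAlgebra R X) :
    diagPart (f + g) = diagPart f + diagPart g := by
  ext a b _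
  simp only [diagPart_apply, IncidenceAlgebra.add_apply]
  split <;> simp

/-- A left inverse for an element with diagonal `1`. -/
private def linvFun (f : IncidenceAlgebra R X) (a : X) : X → R
  | b =>
    if a = b then 1
    else
      -∑ x ∈ (Ico a b).attach,
          let h := mem_Ico.1 x.2
          have : (Icc a (x : X)).card < (Icc a b).card :=
            card_lt_card (Icc_ssubset_Icc_right (h.1.trans h.2.le) le_rfl h.2)
          linvFun f a x * f x b
termination_by b => (Icc a b).card

private lemma linvFun_apply (f : IncidenceAlgebra R X) (a b : X) :
    linvFun f a b = if a = b then 1 else -∑ x ∈ (Ico a b).attach, linvFun f a x * f x b := by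
  rw [linvFun]

private def linv (f : IncidenceAlgebra R X) : IncidenceAlgebra R X :=
  ⟨fun a b => linvFun f a b, fun a b => not_imp_comm.1 fun h => by
    rw [linvFun_apply] at h
    split_ifs at h with hab
    · exact hab.le
    · rw [neg_eq_zero] at h
      obtain ⟨⟨x, hx⟩, -⟩ := Finset.exists_ne_zero_of_sum_ne_zero h
      exact (Finset.nonempty_Ico.1 ⟨x, hx⟩).le⟩

private lemma linv_apply (f : IncidenceAlgebra R X) (a b : X) :
    linv f a b = if a = b then 1 else -∑ x ∈ Ico a b, linv f a x * f x b := by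
  show linvFun f a b = _
  rw [linvFun_apply]
  congr 1
  rw [← Finset.sum_attach (Ico a b) (fun x => linv f a x * f x b)]
  rfl

private lemma linv_mul (f : IncidenceAlgebra R X) (hf : ∀ x, f x x = 1) :
    linv f * f = 1 := by
  ext a b hab
  rw [IncidenceAlgebra.mul_apply, IncidenceAlgebra.one_apply]
  by_cases h : a = b
  · subst h
    rw [Icc_self, Finset.sum_singleton, linv_apply]
    simp [hf]
  · rw [if_neg h, Icc_eq_cons_Ico hab, Finset.sum_cons, hf, mul_one,
      linv_apply, if_neg h]
    ring

/-- A right inverse for an element with diagonal `1`. -/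
private def rinvFun (f : IncidenceAlgebra R X) (b : X) : X → R
  | a =>
    if a = b then 1
    else
      -∑ x ∈ (Ioc a b).attach,
          let h := mem_Ioc.1 x.2
          have : (Icc (x : X) b).card < (Icc a b).card :=
            card_lt_card (Icc_ssubset_Icc_left (h.1.le.trans h.2) h.1 le_rfl)
          f a x * rinvFun f b x
termination_by a => (Icc a b).card

private lemma rinvFun_apply (f : IncidenceAlgebra R X) (a b : X) :
    rinvFun f b a = if a = b then 1 else -∑ x ∈ (Ioc a b).attach, f a x * rinvFun f b x := by
  rw [rinvFun]

private def rinv (f : IncidenceAlgebra R X) : IncidenceAlgebra R X :=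
  ⟨fun a b => rinvFun f b a, fun a b => not_imp_comm.1 fun h => by
    rw [rinvFun_apply] at h
    split_ifs at h with hab
    · exact hab.le
    · rw [neg_eq_zero] at h
      obtain ⟨⟨x, hx⟩, -⟩ := Finset.exists_ne_zero_of_sum_ne_zero h
      exact (Finset.nonempty_Ioc.1 ⟨x, hx⟩).le⟩

private lemma rinv_apply (f : IncidenceAlgebra R X) (a b : X) :
    rinv f a b = if a = b then 1 else -∑ x ∈ Ioc a b, f a x * rinv f x b := by
  show rinvFun f b a = _
  rw [rinvFun_apply]
  congr 1
  rw [← Finset.sum_attach (Ioc a b) (fun x => f a x * rinv f x b)]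
  rfl

private lemma mul_rinv (f : IncidenceAlgebra R X) (hf : ∀ x, f x x = 1) :
    f * rinv f = 1 := by
  ext a b hab
  rw [IncidenceAlgebra.mul_apply, IncidenceAlgebra.one_apply]
  by_cases h : a = b
  · subst h
    rw [Icc_self, Finset.sum_singleton, rinv_apply]
    simp [hf]
  · rw [if_neg h, Icc_eq_cons_Ioc hab, Finset.sum_cons, hf, one_mul,
      rinv_apply, if_neg h]
    ring

/-- An element of the incidence algebra with diagonal `1` is a unit. -/
def unitOfDiagOne (f : IncidenceAlgebra R X) (hf : ∀ x, f x x = 1) :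
    (IncidenceAlgebra R X)ˣ where
  val := f
  inv := linv f
  val_inv := by
    have h : linv f = rinv f :=
      left_inv_eq_right_inv (linv_mul f hf) (mul_rinv f hf)
    rw [h]; exact mul_rinv f hf
  inv_val := linv_mul f hf

end Stmt9Aux

open Stmt9Aux Finset in
/-- a finite family of pairwise commuting idempotents of an incidence algebra is
simultaneously conjugate to its diagonals. -/
theorem stmt_9 {X : Type*} [PartialOrder X] [LocallyFiniteOrder X] [DecidableEq X]
    {R : Type*} [CommRing R]
    (n : ℕ) (α : Fin n → IncidenceAlgebra R X)
    (hidem : ∀ i, α i * α i = α i)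
    (hcomm : ∀ i j, α i * α j = α j * α i) :
    ∃ β : (IncidenceAlgebra R X)ˣ,
      ∀ i, α i = (β : IncidenceAlgebra R X) * diagPart (α i) * ((β⁻¹ : _) : IncidenceAlgebra R X) := by
  induction n with
  | zero => exact ⟨1, fun i => i.elim0⟩
  | succ n ih =>
    obtain ⟨β, hβ⟩ := ih (fun i => α i.castSucc) (fun i => hidem _) (fun i j => hcomm _ _)
    have hdiag_inv : ∀ i : Fin n,
        diagPart (α i.castSucc)
          = ((β⁻¹ : _) : IncidenceAlgebra R X) * α i.castSucc * (β : IncidenceAlgebra R X) := by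
      intro i
      conv_rhs => rw [hβ i]
      simp [mul_assoc]
    set aN : IncidenceAlgebra R X := α (Fin.last n) with haN
    set d : IncidenceAlgebra R X := diagPart aN with hd
    set γ : IncidenceAlgebra R X :=
      ((β⁻¹ : _) : IncidenceAlgebra R X) * aN * (β : IncidenceAlgebra R X) with hγdef
    have hγ2 : γ * γ = γ := by
      rw [hγdef]
      calc (((β⁻¹:_) : IncidenceAlgebra R X) * aN * β)
            * (((β⁻¹:_) : IncidenceAlgebra R X) * aN * (β : IncidenceAlgebra R X))
          = ((β⁻¹:_) : IncidenceAlgebra R X) * (aN * aN) * β := by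
            simp [mul_assoc]
        _ = ((β⁻¹:_) : IncidenceAlgebra R X) * aN * β := by
            rw [show aN * aN = aN from hidem (Fin.last n)]
    have hd2 : d * d = d := by
      rw [hd, ← diagPart_mul, show aN * aN = aN from hidem (Fin.last n)]
    have hdγ : diagPart γ = d := by
      rw [hγdef, diagPart_mul, diagPart_mul, hd]
      rw [diagPart_comm (((β⁻¹ : _) : IncidenceAlgebra R X)) aN]
      rw [mul_assoc, ← diagPart_mul, Units.inv_mul, diagPart_one, mul_one]
    set δ : IncidenceAlgebra R X := γ * d + (1 - γ) * (1 - d) with hδdef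
    have hδdiag : diagPart δ = 1 := by
      have h1 : diagPart ((1 : IncidenceAlgebra R X) - γ) = 1 - d := by
        rw [diagPart_sub, diagPart_one, hdγ]
      have h2 : diagPart ((1 : IncidenceAlgebra R X) - d) = 1 - d := by
        rw [diagPart_sub, diagPart_one, hd, diagPart_diagPart]
      have h3 : diagPart d = d := by rw [hd, diagPart_diagPart]
      rw [hδdef, diagPart_add, diagPart_mul γ d, diagPart_mul (1 - γ) (1 - d), h1, h2, hdγ, h3]
      have expand : d * d + (1 - d) * (1 - d) = 1 + (d * d - d) + (d * d - d) := by
        noncomm_ring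
      rw [expand, hd2]
      simp
    have hδone : ∀ x, δ x x = 1 := by
      intro x
      have := congrFun (congrFun (congrArg (fun g : IncidenceAlgebra R X => (g : X → X → R))
        hδdiag) x) x
      simpa using this
    set u : (IncidenceAlgebra R X)ˣ := unitOfDiagOne δ hδone with hu
    have huval : (u : IncidenceAlgebra R X) = δ := rfl
    -- key identity: γ * δ = δ * d
    have hγδ : γ * δ = δ * d := by
      have e1 : γ * δ = γ * γ * d + (γ - γ * γ) * (1 - d) := by
        rw [hδdef]; noncomm_ring
      rw [hγ2, sub_self, zero_mul, add_zero] at e1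
      have e2 : δ * d = γ * (d * d) + (1 - γ) * (d - d * d) := by
        rw [hδdef]; noncomm_ring
      rw [hd2, sub_self, mul_zero, add_zero] at e2
      rw [e1, e2]
    -- δ commutes with each diagonal diagPart (α i.castSucc)
    have hδcomm : ∀ i : Fin n, Commute δ (diagPart (α i.castSucc)) := by
      intro i
      have hγc : Commute γ (diagPart (α i.castSucc)) := by
        show γ * _ = _ * γ
        rw [hdiag_inv i, hγdef]
        calc (((β⁻¹:_) : IncidenceAlgebra R X) * aN * β)
              * (((β⁻¹:_) : IncidenceAlgebra R X) * α i.castSucc * β)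
            = ((β⁻¹:_) : IncidenceAlgebra R X) * (aN * α i.castSucc) * β := by
              simp [mul_assoc]
          _ = ((β⁻¹:_) : IncidenceAlgebra R X) * (α i.castSucc * aN) * β := by
              rw [haN, hcomm]
          _ = (((β⁻¹:_) : IncidenceAlgebra R X) * α i.castSucc * β)
              * (((β⁻¹:_) : IncidenceAlgebra R X) * aN * β) := by
              simp [mul_assoc]
      have hdc : Commute d (diagPart (α i.castSucc)) := by
        show d * _ = _ * d
        rw [hd]
        exact diagPart_comm _ _
      rw [hδdef]
      exact ((hγc.mul_left hdc).add_left
        (((Commute.one_left _).sub_left hγc).mul_left ((Commute.one_left _).sub_left hdc)))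
    -- assemble
    refine ⟨β * u, fun i => ?_⟩
    induction i using Fin.lastCases with
    | last =>
      have h1 : (u : IncidenceAlgebra R X) * d * ((u⁻¹ : _) : IncidenceAlgebra R X) = γ := by
        rw [huval, ← hγδ, mul_assoc]
        rw [show δ * ((u⁻¹ : _) : IncidenceAlgebra R X) = 1 from u.mul_inv, mul_one]
      rw [← haN, ← hd]
      rw [Units.val_mul, mul_inv_rev, Units.val_mul]
      calc aN = (β : IncidenceAlgebra R X) * γ * ((β⁻¹ : _) : IncidenceAlgebra R X) := by
              rw [hγdef]; simp [mul_assoc]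
        _ = (β : IncidenceAlgebra R X)
              * ((u : IncidenceAlgebra R X) * d * ((u⁻¹ : _) : IncidenceAlgebra R X))
              * ((β⁻¹ : _) : IncidenceAlgebra R X) := by rw [h1]
        _ = (β : IncidenceAlgebra R X) * (u : IncidenceAlgebra R X) * d
              * (((u⁻¹ : _) : IncidenceAlgebra R X) * ((β⁻¹ : _) : IncidenceAlgebra R X)) := by
              simp [mul_assoc]
    | cast j =>
      have h1 : (u : IncidenceAlgebra R X) * diagPart (α j.castSucc)
          * ((u⁻¹ : _) : IncidenceAlgebra R X) = diagPart (α j.castSucc) := by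
        rw [huval, (hδcomm j).eq, mul_assoc]
        rw [show δ * ((u⁻¹ : _) : IncidenceAlgebra R X) = 1 from u.mul_inv, mul_one]
      rw [Units.val_mul, mul_inv_rev, Units.val_mul]
      calc α j.castSucc
          = (β : IncidenceAlgebra R X) * diagPart (α j.castSucc)
              * ((β⁻¹ : _) : IncidenceAlgebra R X) := hβ j
        _ = (β : IncidenceAlgebra R X)
              * ((u : IncidenceAlgebra R X) * diagPart (α j.castSucc)
                * ((u⁻¹ : _) : IncidenceAlgebra R X))
              * ((β⁻¹ : _) : IncidenceAlgebra R X) := by rw [h1]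
        _ = (β : IncidenceAlgebra R X) * (u : IncidenceAlgebra R X) * diagPart (α j.castSucc)
              * (((u⁻¹ : _) : IncidenceAlgebra R X) * ((β⁻¹ : _) : IncidenceAlgebra R X)) := by
              simp [mul_assoc]
end

section
/- Let X be a finite connected poset and φ: I(X,ℤ₂) → I(X,ℤ₂) a bijective additive map. Then φ preserves idempotents if and only if φ is a composition of a bijective shift map and a Lie automorphism of I(X,ℤ₂). -/
open IncidenceAlgebra

namespace Stmt12Aux

open Finset

variable {X : Type*} [PartialOrder X] [Fintype X] [LocallyFiniteOrder X] [DecidableEq X]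

local notation "A" => IncidenceAlgebra (ZMod 2) X

set_option linter.unusedSectionVars false
set_option linter.unusedVariables false

lemma z2add : ∀ a : ZMod 2, a + a = 0 := by decide
lemma z2sq : ∀ a : ZMod 2, a * a = a := by decide
lemma z2sub : ∀ a b : ZMod 2, a - b = a + b := by decide
lemma z2cases : ∀ a : ZMod 2, a = 0 ∨ a = 1 := by decide

lemma addself (f : A) : f + f = 0 := by
  ext a b _
  rw [IncidenceAlgebra.add_apply, IncidenceAlgebra.zero_apply, z2add]

lemma negA (f : A) : -f = f := by
  ext a b _
  rw [IncidenceAlgebra.neg_apply]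
  exact neg_eq_iff_add_eq_zero.2 (z2add _)

lemma subA (f g : A) : f - g = f + g := by
  rw [sub_eq_add_neg, negA]

lemma eq_iff_add_eq_zero {f g : A} : f = g ↔ f + g = 0 := by
  constructor
  · rintro rfl; exact addself f
  · intro h
    have : g = f := by rw [← zero_add g, ← h, add_assoc, addself, add_zero]
    exact this.symm

lemma twosmulZ (f : A) : (2:ℤ) • f = 0 := by
  rw [two_smul]; exact addself f

lemma twosmulN (f : A) : (2:ℕ) • f = 0 := by
  rw [two_smul]; exact addself f

def L (f g : A) : A := f * g + g * f

def q (f : A) : A := f * f + f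

lemma L_comm (f g : A) : L f g = L g f := add_comm _ _

lemma L_self (f : A) : L f f = 0 := addself _

lemma L_add_left (f g h : A) : L (f + g) h = L f h + L g h := by
  unfold L; rw [add_mul, mul_add]; abel

lemma L_add_right (f g h : A) : L f (g + h) = L f g + L f h := by
  unfold L; rw [add_mul, mul_add]; abel

lemma L_zero_left (f : A) : L 0 f = 0 := by unfold L; simp

lemma L_zero_right (f : A) : L f 0 = 0 := by unfold L; simp

lemma q_add (f g : A) : q (f + g) = q f + q g + L f g := by
  unfold q L
  rw [mul_add, add_mul, add_mul]
  abel_nf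
  try simp only [twosmulZ]
  try abel

lemma L_sq (f g : A) : L (f * f) g = L f (L f g) := by
  unfold L
  simp only [mul_add, add_mul, mul_assoc]
  abel_nf
  try simp only [twosmulZ]
  try abel

lemma L_mul (f g h : A) : L f (g * h) = g * L f h + L f g * h := by
  unfold L
  simp only [mul_add, add_mul, mul_assoc]
  abel_nf
  try simp only [twosmulZ]
  try abel

lemma L_q (f : A) : L f (q f) = 0 := by
  unfold q
  rw [L_add_right, L_self, add_zero, ← L_comm, L_sq, L_self, L_zero_right]


section Single

variable {x y z u v : X}

/-- The "matrix unit" with a single 1 entry at (x,y). -/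
def single (h : x ≤ y) : A :=
  ⟨fun a b => if a = x ∧ b = y then 1 else 0, fun a b hab => by
    split_ifs with h'
    · exact absurd (show a ≤ b by rw [h'.1, h'.2]; exact h) hab
    · rfl⟩

lemma single_apply (h : x ≤ y) (a b : X) :
    single h a b = if a = x ∧ b = y then 1 else 0 := rfl

lemma single_mul_single (hxy : x ≤ y) (huv : u ≤ v) (a b : X) :
    (single hxy * single huv) a b = if a = x ∧ b = v ∧ y = u then 1 else 0 := by
  rw [mul_apply]
  have key : ∀ t ∈ Icc a b, single hxy a t * single huv t b
      = if t = y then (if a = x ∧ b = v ∧ y = u then 1 else 0) else 0 := by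
    intro t ht
    simp only [single_apply]
    split_ifs <;> simp_all
  rw [Finset.sum_congr rfl key, Finset.sum_ite_eq' (Icc a b) y]
  by_cases hc : a = x ∧ b = v ∧ y = u
  · obtain ⟨rfl, rfl, rfl⟩ := hc
    simp [Finset.mem_Icc, hxy, huv]
  · simp [hc]

lemma s_mul_s_chain (hxy : x ≤ y) (hyz : y ≤ z) :
    single hxy * single hyz = single (hxy.trans hyz) := by
  ext a b _
  rw [single_mul_single, single_apply]
  simp

lemma s_mul_s_zero (hxy : x ≤ y) (huv : u ≤ v) (h : y ≠ u) :
    single hxy * single huv = 0 := by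
  ext a b _
  rw [single_mul_single, IncidenceAlgebra.zero_apply]
  simp [h]

/-- Diagonal matrix unit. -/
def e (x : X) : A := single (le_refl x)

lemma e_mul_e (x : X) : e x * e x = e x := s_mul_s_chain _ _

lemma e_mul_e_ne (h : x ≠ u) : e x * e u = 0 := s_mul_s_zero _ _ h

lemma e_mul_s (hxy : x ≤ y) : e x * single hxy = single hxy := s_mul_s_chain _ _

lemma e_mul_s_ne (hxy : x ≤ y) (h : z ≠ x) : e z * single hxy = 0 := s_mul_s_zero _ _ h

lemma s_mul_e (hxy : x ≤ y) : single hxy * e y = single hxy := s_mul_s_chain _ _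

lemma s_mul_e_ne (hxy : x ≤ y) (h : y ≠ z) : single hxy * e z = 0 := s_mul_s_zero _ _ h

lemma mul_single_apply (f : A) (hxy : x ≤ y) : (f * single hxy) x y = f x x := by
  rw [mul_apply]
  have key : ∀ t ∈ Icc x y, f x t * single hxy t y = if t = x then f x x else 0 := by
    intro t ht
    rw [single_apply]
    split_ifs with h1 h2 h2 <;> simp_all
  rw [Finset.sum_congr rfl key, Finset.sum_ite_eq' (Icc x y) x]
  simp [Finset.mem_Icc, hxy]

lemma single_mul_apply (f : A) (hxy : x ≤ y) : (single hxy * f) x y = f y y := by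
  rw [mul_apply]
  have key : ∀ t ∈ Icc x y, single hxy x t * f t y = if t = y then f y y else 0 := by
    intro t ht
    rw [single_apply]
    split_ifs with h1 h2 h2 <;> simp_all
  rw [Finset.sum_congr rfl key, Finset.sum_ite_eq' (Icc x y) y]
  simp [Finset.mem_Icc, hxy]

lemma mul_diag (f g : A) (x : X) : (f * g) x x = f x x * g x x := by
  rw [mul_apply, Finset.Icc_self, Finset.sum_singleton]

lemma L_diag (f g : A) (x : X) : L f g x x = 0 := by
  unfold L
  rw [IncidenceAlgebra.add_apply, mul_diag, mul_diag, mul_comm]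
  exact z2add _

lemma q_diag (f : A) (x : X) : q f x x = 0 := by
  unfold q
  rw [IncidenceAlgebra.add_apply, mul_diag, z2sq]
  exact z2add _

lemma idem_diag_zero_eq_zero {p : A} (hp : p * p = p) (hdiag : ∀ x, p x x = 0) : p = 0 := by
  suffices H : ∀ n a b, a ≤ b → (Icc a b).card ≤ n → p a b = 0 by
    ext a b hab
    rw [IncidenceAlgebra.zero_apply]
    exact H _ a b hab le_rfl
  intro n
  induction n with
  | zero =>
    intro a b hab hcard
    have : a ∈ Icc a b := Finset.mem_Icc.2 ⟨le_refl a, hab⟩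
    have := Finset.card_pos.2 ⟨a, this⟩
    omega
  | succ n ih =>
    intro a b hab hcard
    rw [← hp, mul_apply]
    refine Finset.sum_eq_zero fun t ht => ?_
    obtain ⟨hat, htb⟩ := Finset.mem_Icc.1 ht
    by_cases hta : t = a
    · subst hta; rw [hdiag, zero_mul]
    · have hsub : Icc t b ⊆ Icc a b := Finset.Icc_subset_Icc hat le_rfl
      have hanot : a ∉ Icc t b := by
        intro hmem
        exact hta (le_antisymm (Finset.mem_Icc.1 hmem).1 hat)
      have hlt : (Icc t b).card < (Icc a b).card :=
        Finset.card_lt_card ⟨hsub, fun hsup => hanot (hsup (Finset.mem_Icc.2 ⟨le_refl a, hab⟩))⟩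
      rw [ih t b htb (by omega), mul_zero]

end Single


section Span

def suppF (f : A) : Finset (X × X) := Finset.univ.filter fun p => f p.1 p.2 ≠ 0

lemma eq_zero_of_supp_empty {f : A} (h : suppF f = ∅) : f = 0 := by
  ext a b hab
  rw [IncidenceAlgebra.zero_apply]
  by_contra hne
  have hmem : (a, b) ∈ suppF f := by
    simp only [suppF, Finset.mem_filter, Finset.mem_univ, true_and]
    exact hne
  simp [h] at hmem

lemma span_induction (P : A → Prop) (h0 : P 0)
    (hplus : ∀ f g, P f → P g → P (f + g))
    (hs : ∀ x y (h : x ≤ y), P (single h)) (f : A) : P f := by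
  suffices H : ∀ n (f : A), (suppF f).card ≤ n → P f from H _ f le_rfl
  intro n
  induction n with
  | zero =>
    intro f hf
    have := Finset.card_eq_zero.1 (Nat.le_zero.1 hf)
    exact (eq_zero_of_supp_empty this) ▸ h0
  | succ n ih =>
    intro f hf
    rcases Finset.eq_empty_or_nonempty (suppF f) with he | ⟨p, hp⟩
    · exact (eq_zero_of_supp_empty he) ▸ h0
    · have hne : f p.1 p.2 ≠ 0 := by
        simpa [suppF] using hp
      have hle : p.1 ≤ p.2 := le_of_ne_zero hne
      have hone : f p.1 p.2 = 1 := by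
        rcases z2cases (f p.1 p.2) with h | h
        · exact absurd h hne
        · exact h
      set g := f + single hle with hg
      have hsupp : suppF g = (suppF f).erase p := by
        ext ⟨a, b⟩
        simp only [suppF, Finset.mem_filter, Finset.mem_univ, true_and, Finset.mem_erase]
        by_cases hab : a = p.1 ∧ b = p.2
        · obtain ⟨rfl, rfl⟩ := hab
          rw [hg, IncidenceAlgebra.add_apply, single_apply, if_pos ⟨rfl, rfl⟩, hone]
          simp [show (1 : ZMod 2) + 1 = 0 by decide]
        · rw [hg, IncidenceAlgebra.add_apply, single_apply, if_neg hab, add_zero]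
          have hnp : (a, b) ≠ p := by
            rintro rfl
            exact hab ⟨rfl, rfl⟩
          tauto
      have hcard : (suppF g).card ≤ n := by
        rw [hsupp]
        have h1 := Finset.card_erase_of_mem hp
        omega
      have hPg := ih g hcard
      have hfg : f = g + single hle := by
        rw [hg, add_assoc, addself, add_zero]
      rw [hfg]
      exact hplus _ _ hPg (hs _ _ hle)

end Span

section Center

variable {x y u v : X}

lemma apply_congr {f g : A} (h : f = g) (a b : X) : f a b = g a b := by rw [h]

lemma mul_e_apply_of_le (f : A) (hxy : x ≤ y) : (f * e y) x y = f x y := by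
  rw [mul_apply]
  have key : ∀ t ∈ Icc x y, f x t * e y t y = if t = y then f x y else 0 := by
    intro t ht
    rw [e, single_apply]
    split_ifs <;> simp_all
  rw [Finset.sum_congr rfl key, Finset.sum_ite_eq' (Icc x y) y]
  simp [Finset.mem_Icc, hxy]

lemma e_mul_apply_of_ne (f : A) (hne : x ≠ y) : (e y * f) x y = 0 := by
  rw [mul_apply]
  refine Finset.sum_eq_zero fun t ht => ?_
  rw [e, single_apply, if_neg (by tauto), zero_mul]

lemma central_offdiag {z : A} (hz : ∀ g, g * z = z * g) {x y : X} (hxy : x ≤ y)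
    (hne : x ≠ y) : z x y = 0 := by
  have h := apply_congr (hz (e y)) x y
  rw [mul_e_apply_of_le z hxy, e_mul_apply_of_ne z hne] at h
  exact h.symm

lemma central_diag_const {z : A} (hz : ∀ g, g * z = z * g) {x y : X} (hxy : x ≤ y) :
    z x x = z y y := by
  have h := apply_congr (hz (single hxy)) x y
  rw [single_mul_apply z hxy, mul_single_apply z hxy] at h
  exact h.symm

lemma central_q_zero {z : A} (hz : ∀ g, g * z = z * g) : q z = 0 := by
  ext a b hab
  rw [IncidenceAlgebra.zero_apply]
  by_cases habe : a = b
  · subst habe; exact q_diag z a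
  · have hq : q z a b = (z * z) a b + z a b := rfl
    rw [hq, central_offdiag hz hab habe, add_zero, mul_apply]
    refine Finset.sum_eq_zero fun t ht => ?_
    obtain ⟨hat, htb⟩ := Finset.mem_Icc.1 ht
    by_cases hta : t = a
    · subst hta
      rw [central_offdiag hz hab habe, mul_zero]
    · rw [central_offdiag hz hat (fun h => hta h.symm), zero_mul]

def diagC (t : ZMod 2) : A :=
  ⟨fun a b => if a = b then t else 0, fun a b hab => by
    rw [if_neg]
    rintro rfl
    exact hab le_rfl⟩

lemma diagC_apply (t : ZMod 2) (a b : X) : diagC t a b = if a = b then t else 0 := rfl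

lemma diagC_zero : (diagC 0 : A) = 0 := by
  ext a b _
  rw [diagC_apply, IncidenceAlgebra.zero_apply, ite_self]

lemma diagC_add (s t : ZMod 2) : (diagC (s + t) : A) = diagC s + diagC t := by
  ext a b _
  rw [IncidenceAlgebra.add_apply, diagC_apply, diagC_apply, diagC_apply]
  split_ifs <;> simp

lemma mul_diagC (f : A) (t : ZMod 2) (a b : X) : (f * diagC t : A) a b = f a b * t := by
  by_cases hab : a ≤ b
  · rw [mul_apply]
    have key : ∀ s ∈ Icc a b, f a s * diagC t s b = if s = b then f a b * t else 0 := by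
      intro s hs
      rw [diagC_apply]
      split_ifs <;> simp_all
    rw [Finset.sum_congr rfl key, Finset.sum_ite_eq' (Icc a b) b]
    simp [Finset.mem_Icc, hab]
  · rw [apply_eq_zero_of_not_le hab, apply_eq_zero_of_not_le hab, zero_mul]

lemma diagC_mul (f : A) (t : ZMod 2) (a b : X) : (diagC t * f : A) a b = t * f a b := by
  by_cases hab : a ≤ b
  · rw [mul_apply]
    have key : ∀ s ∈ Icc a b, diagC t a s * f s b = if s = a then t * f a b else 0 := by
      intro s hs
      rw [diagC_apply]
      by_cases h1 : a = s
      · subst h1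
        rw [if_pos rfl, if_pos rfl]
      · rw [if_neg h1, if_neg (fun h => h1 h.symm), zero_mul]
    rw [Finset.sum_congr rfl key, Finset.sum_ite_eq' (Icc a b) a]
    simp [Finset.mem_Icc, hab]
  · rw [apply_eq_zero_of_not_le hab, apply_eq_zero_of_not_le hab, mul_zero]

lemma diagC_comm (t : ZMod 2) (g : A) : g * diagC t = diagC t * g := by
  ext a b _
  rw [mul_diagC, diagC_mul, mul_comm]

lemma diagC_center (t : ZMod 2) : (diagC t : A) ∈ Set.center (IncidenceAlgebra (ZMod 2) X) :=
  Semigroup.mem_center_iff.2 (diagC_comm t)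

lemma L_diagC_right (f : A) (t : ZMod 2) : L f (diagC t) = 0 := by
  ext a b _
  have hL : L f (diagC t) a b = (f * diagC t : A) a b + (diagC t * f : A) a b := rfl
  rw [hL, mul_diagC, diagC_mul, mul_comm]
  exact z2add _

lemma L_diagC_left (f : A) (t : ZMod 2) : L (diagC t) f = 0 := by
  rw [L_comm]; exact L_diagC_right f t

lemma central_eq_diagC (hconn : ∀ x y : X, Relation.ReflTransGen (fun a b : X => a ≤ b ∨ b ≤ a) x y)
    {z : A} (hz : ∀ g, g * z = z * g) (x₀ : X) : z = diagC (z x₀ x₀) := by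
  have hdiag : ∀ a : X, z a a = z x₀ x₀ := by
    intro a
    have h := hconn x₀ a
    induction h with
    | refl => rfl
    | tail hbc hstep ih =>
      rw [← ih]
      rcases hstep with h | h
      · exact (central_diag_const hz h).symm
      · exact central_diag_const hz h
  ext a b hab
  rw [diagC_apply]
  by_cases habe : a = b
  · subst habe
    rw [if_pos rfl]
    exact hdiag a
  · rw [if_neg habe]
    exact central_offdiag hz hab habe

instance finiteA : Finite (IncidenceAlgebra (ZMod 2) X) :=
  Finite.of_injective (fun f => (⇑f : X → X → ZMod 2)) DFunLike.coe_injective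

end Center


section Brackets

variable {x y z u v : X}

lemma q_eq_zero_iff {f : A} : q f = 0 ↔ f * f = f := by
  unfold q
  constructor
  · intro h
    exact (eq_iff_add_eq_zero.2 h)
  · intro h
    rw [h]
    exact addself f

lemma comm_of_L_zero {z g : A} (h : L z g = 0) : g * z = z * g := by
  have : z * g + g * z = 0 := h
  exact (eq_iff_add_eq_zero.2 this).symm

lemma idem_add {u v : A} (hu : u * u = u) (hv : v * v = v) (huv : L u v = 0) :
    (u + v) * (u + v) = u + v := by
  rw [← q_eq_zero_iff] at *
  rw [q_add, hu, hv, huv, add_zero, add_zero]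

lemma s_sq_zero (hxy : x < y) : single hxy.le * single hxy.le = 0 :=
  s_mul_s_zero _ _ hxy.ne'

lemma q_s (hxy : x < y) : q (single hxy.le) = single hxy.le := by
  unfold q
  rw [s_sq_zero hxy, zero_add]

lemma L_e_e_ne (h : x ≠ u) : L (e x) (e u) = 0 := by
  unfold L
  rw [e_mul_e_ne h, e_mul_e_ne (Ne.symm h), add_zero]

lemma L_e_s_src (hxy : x < y) : L (e x) (single hxy.le) = single hxy.le := by
  unfold L
  rw [e_mul_s, s_mul_e_ne _ hxy.ne', add_zero]

lemma L_e_s_tgt (hxy : x < y) : L (e y) (single hxy.le) = single hxy.le := by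
  unfold L
  rw [e_mul_s_ne _ hxy.ne', s_mul_e, zero_add]

lemma L_e_s_zero (hxy : x ≤ y) (hzx : z ≠ x) (hzy : z ≠ y) : L (e z) (single hxy) = 0 := by
  unfold L
  rw [e_mul_s_ne _ hzx, s_mul_e_ne _ (Ne.symm hzy), add_zero]

lemma L_s_s_zero (hxy : x ≤ y) (huv : u ≤ v) (h1 : y ≠ u) (h2 : v ≠ x) :
    L (single hxy) (single huv) = 0 := by
  unfold L
  rw [s_mul_s_zero _ _ h1, s_mul_s_zero _ _ h2, add_zero]

lemma L_s_s_chain (hxy : x < y) (hyz : y < z) :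
    L (single hxy.le) (single hyz.le) = single (hxy.le.trans hyz.le) := by
  unfold L
  rw [s_mul_s_chain, s_mul_s_zero _ _ (fun h => (hxy.trans hyz).ne' h), add_zero]

/-- `e x + single hxy` is idempotent. -/
lemma idem_es (hxy : x < y) :
    (e x + single hxy.le) * (e x + single hxy.le) = e x + single hxy.le := by
  rw [← q_eq_zero_iff, q_add, q_eq_zero_iff.2 (e_mul_e x), q_s hxy, L_e_s_src hxy, zero_add]
  exact addself _

/-- `e y + single hxy` is idempotent. -/
lemma idem_se (hxy : x < y) :
    (e y + single hxy.le) * (e y + single hxy.le) = e y + single hxy.le := by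
  rw [← q_eq_zero_iff, q_add, q_eq_zero_iff.2 (e_mul_e y), q_s hxy, L_e_s_tgt hxy, zero_add]
  exact addself _

lemma add_add_cancel_left (a b : A) : a + (a + b) = b := by
  rw [← add_assoc, addself, zero_add]

lemma add_swap_eq {a b c d : A} (h : a + b = c + d) : a + c = b + d := by
  rw [eq_iff_add_eq_zero] at h ⊢
  calc a + c + (b + d) = a + b + (c + d) := by abel
    _ = 0 := h

lemma z2cancel : ∀ a b : ZMod 2, a = a + b → b = 0 := by decide

lemma diagC_one : (diagC 1 : A) = 1 := by
  ext a b _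
  rw [diagC_apply, one_apply]

lemma add_q (a : A) : a + q a = a * a := by
  unfold q
  abel_nf
  try simp only [twosmulZ, zero_add, add_zero]
  try abel

end Brackets

section Forward

variable {x y z u v : X}
variable {φ : IncidenceAlgebra (ZMod 2) X → IncidenceAlgebra (ZMod 2) X}
  (hadd : ∀ f g, φ (f + g) = φ f + φ g)
  (hE : ∀ f : IncidenceAlgebra (ZMod 2) X, f * f = f → φ f * φ f = φ f)

include hadd hE

lemma phi_zero : φ 0 = 0 := by
  have h := hadd 0 0
  rw [add_zero] at h
  have h2 : φ 0 + 0 = φ 0 + φ 0 := by rw [add_zero]; exact h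
  exact (add_left_cancel h2).symm

lemma qphi {f : A} (h : f * f = f) : q (φ f) = 0 := by
  unfold q
  rw [hE f h]
  exact addself _

lemma R1 (hxy : x < y) :
    L (φ (e x)) (φ (single hxy.le)) = q (φ (single hxy.le)) := by
  have h1 := qphi hadd hE (idem_es hxy)
  rw [hadd, q_add, qphi hadd hE (e_mul_e x), zero_add] at h1
  rw [eq_iff_add_eq_zero, add_comm]
  exact h1

lemma R2 (hxy : x < y) :
    L (φ (e y)) (φ (single hxy.le)) = q (φ (single hxy.le)) := by
  have h1 := qphi hadd hE (idem_se hxy)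
  rw [hadd, q_add, qphi hadd hE (e_mul_e y), zero_add] at h1
  rw [eq_iff_add_eq_zero, add_comm]
  exact h1

lemma R3 (hne : x ≠ u) : L (φ (e x)) (φ (e u)) = 0 := by
  have h1 := qphi hadd hE (idem_add (e_mul_e x) (e_mul_e u) (L_e_e_ne hne))
  rw [hadd, q_add, qphi hadd hE (e_mul_e x), qphi hadd hE (e_mul_e u), zero_add, zero_add] at h1
  exact h1

lemma R4 (hxy : x < y) (hzx : z ≠ x) (hzy : z ≠ y) :
    L (φ (e z)) (φ (single hxy.le)) = 0 := by
  have hidem : (e z + (e x + single hxy.le)) * (e z + (e x + single hxy.le))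
      = e z + (e x + single hxy.le) := by
    refine idem_add (e_mul_e z) (idem_es hxy) ?_
    rw [L_add_right, L_e_e_ne hzx, L_e_s_zero hxy.le hzx hzy, add_zero]
  have h1 := qphi hadd hE hidem
  rw [hadd, q_add, qphi hadd hE (e_mul_e z), qphi hadd hE (idem_es hxy), zero_add, zero_add,
    hadd, L_add_right, R3 hadd hE hzx, zero_add] at h1
  exact h1

lemma R5 (hxy : x < y) (hxv : x < v) :
    L (φ (single hxy.le)) (φ (single hxv.le)) = 0 := by
  have hidem : ((e x + single hxy.le) + single hxv.le) * ((e x + single hxy.le) + single hxv.le)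
      = (e x + single hxy.le) + single hxv.le := by
    rw [← q_eq_zero_iff, q_add, q_eq_zero_iff.2 (idem_es hxy), q_s hxv, zero_add,
      L_add_left, L_e_s_src hxv, L_s_s_zero hxy.le hxv.le hxy.ne' hxv.ne', add_zero]
    exact addself _
  have h1 := qphi hadd hE hidem
  rw [hadd, q_add, qphi hadd hE (idem_es hxy), zero_add, hadd, L_add_left, R1 hadd hE hxv,
    ← add_assoc, addself, zero_add] at h1
  exact h1

lemma R5' (hxy : x < y) (huy : u < y) :
    L (φ (single hxy.le)) (φ (single huy.le)) = 0 := by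
  have hidem : ((e y + single hxy.le) + single huy.le) * ((e y + single hxy.le) + single huy.le)
      = (e y + single hxy.le) + single huy.le := by
    rw [← q_eq_zero_iff, q_add, q_eq_zero_iff.2 (idem_se hxy), q_s huy, zero_add,
      L_add_left, L_e_s_tgt huy, L_s_s_zero hxy.le huy.le huy.ne' hxy.ne', add_zero]
    exact addself _
  have h1 := qphi hadd hE hidem
  rw [hadd, q_add, qphi hadd hE (idem_se hxy), zero_add, hadd, L_add_left, R2 hadd hE huy,
    ← add_assoc, addself, zero_add] at h1
  exact h1

lemma R6 (hxy : x < y) (huv : u < v) (hxu : x ≠ u) (hxv : x ≠ v) (hyu : y ≠ u) (hyv : y ≠ v) :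
    L (φ (single hxy.le)) (φ (single huv.le)) = 0 := by
  have hL0 : L (e x + single hxy.le) (e u + single huv.le) = 0 := by
    rw [L_add_left, L_add_right, L_add_right, L_e_e_ne hxu, L_e_s_zero huv.le hxu hxv,
      L_comm (single hxy.le) (e u), L_e_s_zero hxy.le (Ne.symm hxu) (Ne.symm hyu),
      L_s_s_zero hxy.le huv.le hyu (Ne.symm hxv), add_zero, add_zero]
  have h1 := qphi hadd hE (idem_add (idem_es hxy) (idem_es huv) hL0)
  rw [hadd, q_add, qphi hadd hE (idem_es hxy), qphi hadd hE (idem_es huv), zero_add, zero_add,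
    hadd, hadd, L_add_left, L_add_right, L_add_right, R3 hadd hE hxu,
    R4 hadd hE huv hxu hxv, L_comm (φ (single hxy.le)) (φ (e u)),
    R4 hadd hE hxy (Ne.symm hxu) (Ne.symm hyu)] at h1
  simp only [zero_add, add_zero] at h1
  exact h1

lemma R7 (hxy : x < y) (hyz : y < z) :
    L (φ (single hxy.le)) (φ (single hyz.le)) = q (φ (single (hxy.trans hyz).le)) := by
  have hxz : x < z := hxy.trans hyz
  have hidem : (((e y + single hxy.le) + single hyz.le) + single hxz.le)
      * (((e y + single hxy.le) + single hyz.le) + single hxz.le)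
      = ((e y + single hxy.le) + single hyz.le) + single hxz.le := by
    rw [← q_eq_zero_iff, q_add, q_add, q_eq_zero_iff.2 (idem_se hxy), q_s hyz, q_s hxz,
      zero_add, L_add_left, L_e_s_src hyz, L_s_s_chain hxy hyz,
      L_add_left, L_add_left, L_e_s_zero hxz.le hxy.ne' hyz.ne,
      L_s_s_zero hxy.le hxz.le hxy.ne' hxz.ne',
      L_s_s_zero hyz.le hxz.le hxz.ne' hyz.ne', add_zero, add_zero, add_zero,
      ← add_assoc, addself, zero_add]
    exact addself _
  have h1 := qphi hadd hE hidem
  rw [hadd, q_add, hadd, q_add, qphi hadd hE (idem_se hxy), zero_add, hadd, L_add_left,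
    R1 hadd hE hyz, ← add_assoc, addself, zero_add,
    L_add_left, L_add_left,
    R4 hadd hE hxz hxy.ne' hyz.ne,
    R5 hadd hE hxy hxz,
    R5' hadd hE hyz hxz] at h1
  simp only [zero_add, add_zero] at h1
  rw [eq_iff_add_eq_zero]
  exact h1

lemma hsq_comm (hsurj : Function.Surjective φ) (hxy : x < y) (t : IncidenceAlgebra (ZMod 2) X) :
    L (φ (single hxy.le) * φ (single hxy.le)) t = 0 := by
  obtain ⟨g, rfl⟩ := hsurj t
  refine span_induction
    (fun g => L (φ (single hxy.le) * φ (single hxy.le)) (φ g) = 0) ?_ ?_ ?_ g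
  · show L (φ (single hxy.le) * φ (single hxy.le)) (φ 0) = 0
    rw [phi_zero hadd hE, L_zero_right]
  · intro f₁ f₂ h₁ h₂
    show L (φ (single hxy.le) * φ (single hxy.le)) (φ (f₁ + f₂)) = 0
    rw [hadd, L_add_right, h₁, h₂, add_zero]
  · intro u v huv
    show L (φ (single hxy.le) * φ (single hxy.le)) (φ (single huv)) = 0
    rcases huv.lt_or_eq with hlt | heq
    · by_cases hux : u = x
      · subst hux
        rw [L_sq, R5 hadd hE hxy hlt, L_zero_right]
      · by_cases hvy : v = y
        · subst hvy
          rw [L_sq, R5' hadd hE hxy hlt, L_zero_right]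
        · by_cases huy : u = y
          · subst huy
            have hxv : x < v := hxy.trans hlt
            rw [L_sq, R7 hadd hE hxy hlt]
            have hq : q (φ (single hxv.le))
                = φ (single hxv.le) * φ (single hxv.le) + φ (single hxv.le) := rfl
            rw [hq, L_add_right, L_mul, R5 hadd hE hxy hxv, mul_zero, zero_mul, add_zero,
              add_zero]
          · by_cases hvx : v = x
            · subst hvx
              have huy' : u < y := hlt.trans hxy
              rw [L_sq, L_comm (φ (single hxy.le)) (φ (single hlt.le)), R7 hadd hE hlt hxy]
              have hq : q (φ (single huy'.le))
                  = φ (single huy'.le) * φ (single huy'.le) + φ (single huy'.le) := rfl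
              rw [hq, L_add_right, L_mul, R5' hadd hE hxy huy', mul_zero, zero_mul, add_zero,
                add_zero]
            · rw [L_sq, R6 hadd hE hxy hlt (Ne.symm hux) (Ne.symm hvx) (Ne.symm huy)
                (Ne.symm hvy), L_zero_right]
    · subst heq
      have heu : (single huv : IncidenceAlgebra (ZMod 2) X) = e u := rfl
      rw [heu]
      by_cases hux : u = x
      · subst hux
        rw [L_sq, L_comm (φ (single hxy.le)) (φ (e u)), R1 hadd hE hxy, L_q]
      · by_cases huy : u = y
        · subst huy
          rw [L_sq, L_comm (φ (single hxy.le)) (φ (e u)), R2 hadd hE hxy, L_q]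
        · rw [L_sq, L_comm (φ (single hxy.le)) (φ (e u)), R4 hadd hE hxy hux huy,
            L_zero_right]

lemma hsq_central (hsurj : Function.Surjective φ) (hxy : x < y) :
    φ (single hxy.le) * φ (single hxy.le) ∈ Set.center (IncidenceAlgebra (ZMod 2) X) :=
  Semigroup.mem_center_iff.2 fun g => comm_of_L_zero (hsq_comm hadd hE hsurj hxy g)

lemma D_single_single (hsurj : Function.Surjective φ) (hxy : x ≤ y) (huv : u ≤ v) :
    φ (L (single hxy) (single huv)) + L (φ (single hxy)) (φ (single huv))
      ∈ Set.center (IncidenceAlgebra (ZMod 2) X) := by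
  rcases hxy.lt_or_eq with hx | hx
  · rcases huv.lt_or_eq with hu | hu
    · -- both strict
      by_cases h1 : u = y
      · subst h1
        rw [L_s_s_chain hx hu, R7 hadd hE hx hu, add_q]
        exact hsq_central hadd hE hsurj (hx.trans hu)
      · by_cases h2 : v = x
        · subst h2
          rw [L_comm (single hxy) (single huv), L_s_s_chain hu hx,
            L_comm (φ (single hxy)) (φ (single huv)), R7 hadd hE hu hx, add_q]
          exact hsq_central hadd hE hsurj (hu.trans hx)
        · by_cases h3 : u = x
          · subst h3
            by_cases h4 : v = y
            · subst h4
              rw [L_self, phi_zero hadd hE, L_self, add_zero]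
              exact Set.zero_mem_center
            · rw [L_s_s_zero hxy huv hx.ne' hu.ne', phi_zero hadd hE, R5 hadd hE hx hu,
                add_zero]
              exact Set.zero_mem_center
          · by_cases h4 : v = y
            · subst h4
              rw [L_s_s_zero hxy huv hu.ne' hx.ne', phi_zero hadd hE, R5' hadd hE hx hu,
                add_zero]
              exact Set.zero_mem_center
            · rw [L_s_s_zero hxy huv (fun h => h1 h.symm) h2, phi_zero hadd hE,
                R6 hadd hE hx hu (Ne.symm h3) (fun h => h2 h.symm) (fun h => h1 h.symm)
                  (fun h => h4 h.symm), add_zero]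
              exact Set.zero_mem_center
    · -- inner diagonal
      subst hu
      have heu : (single huv : IncidenceAlgebra (ZMod 2) X) = e u := rfl
      rw [heu]
      by_cases h3 : u = x
      · subst h3
        rw [L_comm (single hxy) (e u), L_e_s_src hx,
          L_comm (φ (single hxy)) (φ (e u)), R1 hadd hE hx, add_q]
        exact hsq_central hadd hE hsurj hx
      · by_cases h4 : u = y
        · subst h4
          rw [L_comm (single hxy) (e u), L_e_s_tgt hx,
            L_comm (φ (single hxy)) (φ (e u)), R2 hadd hE hx, add_q]
          exact hsq_central hadd hE hsurj hx
        · rw [L_comm (single hxy) (e u), L_e_s_zero hxy h3 h4, phi_zero hadd hE,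
            L_comm (φ (single hxy)) (φ (e u)), R4 hadd hE hx h3 h4, add_zero]
          exact Set.zero_mem_center
  · -- outer diagonal
    subst hx
    have hex : (single hxy : IncidenceAlgebra (ZMod 2) X) = e x := rfl
    rw [hex]
    rcases huv.lt_or_eq with hu | hu
    · by_cases h3 : x = u
      · subst h3
        rw [L_e_s_src hu, R1 hadd hE hu, add_q]
        exact hsq_central hadd hE hsurj hu
      · by_cases h4 : x = v
        · subst h4
          rw [L_e_s_tgt hu, R2 hadd hE hu, add_q]
          exact hsq_central hadd hE hsurj hu
        · rw [L_e_s_zero huv h3 h4, phi_zero hadd hE, R4 hadd hE hu h3 h4, add_zero]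
          exact Set.zero_mem_center
    · subst hu
      have heu : (single huv : IncidenceAlgebra (ZMod 2) X) = e u := rfl
      rw [heu]
      by_cases h3 : x = u
      · subst h3
        rw [L_self, phi_zero hadd hE, L_self, add_zero]
        exact Set.zero_mem_center
      · rw [L_e_e_ne h3, phi_zero hadd hE, R3 hadd hE h3, add_zero]
        exact Set.zero_mem_center

lemma D_mem_center (hsurj : Function.Surjective φ) (f g : IncidenceAlgebra (ZMod 2) X) :
    φ (L f g) + L (φ f) (φ g) ∈ Set.center (IncidenceAlgebra (ZMod 2) X) := by
  revert g
  refine span_induction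
    (fun f => ∀ g, φ (L f g) + L (φ f) (φ g) ∈ Set.center (IncidenceAlgebra (ZMod 2) X))
    ?_ ?_ ?_ f
  · intro g
    show φ (L 0 g) + L (φ 0) (φ g) ∈ Set.center (IncidenceAlgebra (ZMod 2) X)
    rw [L_zero_left, phi_zero hadd hE, L_zero_left, add_zero]
    exact Set.zero_mem_center
  · intro f₁ f₂ h₁ h₂ g
    show φ (L (f₁ + f₂) g) + L (φ (f₁ + f₂)) (φ g) ∈ Set.center (IncidenceAlgebra (ZMod 2) X)
    rw [L_add_left, hadd, hadd, L_add_left]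
    have hmem := Set.add_mem_center (h₁ g) (h₂ g)
    convert hmem using 1
    abel
  · intro x y hxy
    -- now induct on g
    refine span_induction
      (fun g => φ (L (single hxy) g) + L (φ (single hxy)) (φ g)
        ∈ Set.center (IncidenceAlgebra (ZMod 2) X)) ?_ ?_ ?_
    · show φ (L (single hxy) 0) + L (φ (single hxy)) (φ 0)
        ∈ Set.center (IncidenceAlgebra (ZMod 2) X)
      rw [L_zero_right, phi_zero hadd hE, L_zero_right, add_zero]
      exact Set.zero_mem_center
    · intro g₁ g₂ h₁ h₂
      show φ (L (single hxy) (g₁ + g₂)) + L (φ (single hxy)) (φ (g₁ + g₂))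
        ∈ Set.center (IncidenceAlgebra (ZMod 2) X)
      rw [L_add_right, hadd, hadd, L_add_right]
      have hmem := Set.add_mem_center h₁ h₂
      convert hmem using 1
      abel
    · intro u v huv
      exact D_single_single hadd hE hsurj hxy huv

end Forward


section Backward

variable {φ τ ψ : IncidenceAlgebra (ZMod 2) X → IncidenceAlgebra (ZMod 2) X}

lemma backward
    (hτshift : ∀ f, τ f - f ∈ Set.center (IncidenceAlgebra (ZMod 2) X))
    (hψbij : Function.Bijective ψ)
    (hψlie : ∀ f g, ψ (f * g - g * f) = ψ f * ψ g - ψ g * ψ f)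
    (hcomp : φ = τ ∘ ψ)
    (f : IncidenceAlgebra (ZMod 2) X) (hf : f * f = f) : φ f * φ f = φ f := by
  have hLie : ∀ a b, ψ (L a b) = L (ψ a) (ψ b) := by
    intro a b
    have h := hψlie a b
    rw [subA, subA] at h
    exact h
  have hq0 : q (ψ f) = 0 := by
    have hcomm : ∀ t, t * q (ψ f) = q (ψ f) * t := by
      intro t
      obtain ⟨g, rfl⟩ := hψbij.2 t
      refine comm_of_L_zero ?_
      have hqexp : q (ψ f) = ψ f * ψ f + ψ f := rfl
      rw [hqexp, L_add_left, L_sq, ← hLie f g, ← hLie f (L f g), ← L_sq, hf]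
      exact addself _
    ext a b hab
    rw [IncidenceAlgebra.zero_apply]
    by_cases habe : a = b
    · subst habe
      exact q_diag _ a
    · exact central_offdiag hcomm hab habe
  have hidem_ψ : ψ f * ψ f = ψ f := q_eq_zero_iff.1 hq0
  have hzc : ∀ g, g * (τ (ψ f) - ψ f) = (τ (ψ f) - ψ f) * g :=
    Semigroup.mem_center_iff.1 (hτshift (ψ f))
  have hφf : φ f = ψ f + (τ (ψ f) - ψ f) := by
    rw [hcomp]
    show τ (ψ f) = ψ f + (τ (ψ f) - ψ f)
    abel
  have hzz : (τ (ψ f) - ψ f) * (τ (ψ f) - ψ f) = τ (ψ f) - ψ f :=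
    q_eq_zero_iff.1 (central_q_zero hzc)
  rw [hφf, mul_add, add_mul, add_mul, hidem_ψ, hzz, hzc (ψ f)]
  abel_nf
  try simp only [twosmulZ, zero_add, add_zero]
  try abel

end Backward

section Main

variable {φ : IncidenceAlgebra (ZMod 2) X → IncidenceAlgebra (ZMod 2) X}
  (hadd : ∀ f g, φ (f + g) = φ f + φ g)
  (hE : ∀ f : IncidenceAlgebra (ZMod 2) X, f * f = f → φ f * φ f = φ f)

include hadd hE

lemma forward_main
    (hconn : ∀ x y : X, Relation.ReflTransGen (fun a b : X => a ≤ b ∨ b ≤ a) x y)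
    (hbij : Function.Bijective φ) (hX : Nonempty X) :
    ∃ τ ψ : IncidenceAlgebra (ZMod 2) X → IncidenceAlgebra (ZMod 2) X,
        (∀ f g, τ (f + g) = τ f + τ g) ∧
        (∀ f, τ f - f ∈ Set.center (IncidenceAlgebra (ZMod 2) X)) ∧
        Function.Bijective τ ∧
        (∀ f g, ψ (f + g) = ψ f + ψ g) ∧
        Function.Bijective ψ ∧
        (∀ f g, ψ (f * g - g * f) = ψ f * ψ g - ψ g * ψ f) ∧
        φ = τ ∘ ψ := by
  classical
  -- an idempotent preimage of 1
  obtain ⟨p, hpE, hp1⟩ : ∃ p ∈ {f : IncidenceAlgebra (ZMod 2) X | f * f = f}, φ p = 1 := by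
    have hEfin : ({f : IncidenceAlgebra (ZMod 2) X | f * f = f}).Finite := Set.toFinite _
    have hmaps : Set.MapsTo φ {f : IncidenceAlgebra (ZMod 2) X | f * f = f}
        {f : IncidenceAlgebra (ZMod 2) X | f * f = f} := fun f hf => hE f hf
    have hbijOn := (hEfin.injOn_iff_bijOn_of_mapsTo hmaps).1 hbij.1.injOn
    exact hbijOn.surjOn (by show (1 : IncidenceAlgebra (ZMod 2) X) * 1 = 1; rw [one_mul])
  have hpp : p * p = p := hpE
  have hpne : p ≠ 0 := by
    intro h
    rw [h, phi_zero hadd hE] at hp1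
    obtain ⟨x⟩ := hX
    have h2 := apply_congr hp1 x x
    rw [IncidenceAlgebra.zero_apply, one_apply, if_pos rfl] at h2
    exact one_ne_zero h2.symm
  obtain ⟨x₀, hx₀⟩ : ∃ x₀, p x₀ x₀ = 1 := by
    by_contra hno
    push_neg at hno
    have hdiag0 : ∀ x, p x x = 0 := by
      intro x
      rcases z2cases (p x x) with h | h
      · exact h
      · exact absurd h (hno x)
    exact hpne (idem_diag_zero_eq_zero hpp hdiag0)
  -- the Lie automorphism ψ
  set ψ : IncidenceAlgebra (ZMod 2) X → IncidenceAlgebra (ZMod 2) X :=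
    fun f => φ f + diagC (φ f x₀ x₀ + f x₀ x₀) with hψdef
  have hcadd : ∀ f g : IncidenceAlgebra (ZMod 2) X,
      (diagC (φ (f + g) x₀ x₀ + (f + g) x₀ x₀) : IncidenceAlgebra (ZMod 2) X)
        = diagC (φ f x₀ x₀ + f x₀ x₀) + diagC (φ g x₀ x₀ + g x₀ x₀) := by
    intro f g
    rw [← diagC_add]
    congr 1
    rw [hadd, IncidenceAlgebra.add_apply, IncidenceAlgebra.add_apply]
    ring
  have hψadd : ∀ f g, ψ (f + g) = ψ f + ψ g := by
    intro f g
    simp only [hψdef]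
    rw [hcadd f g, hadd]
    abel
  have hD : ∀ f g : IncidenceAlgebra (ZMod 2) X,
      φ (L f g) + L (φ f) (φ g) = diagC (φ (L f g) x₀ x₀) := by
    intro f g
    have hcen := D_mem_center hadd hE hbij.2 f g
    have hcomm := Semigroup.mem_center_iff.1 hcen
    have heq := central_eq_diagC hconn hcomm x₀
    rw [heq]
    congr 1
    rw [IncidenceAlgebra.add_apply, L_diag, add_zero]
  have hψLie : ∀ f g, ψ (L f g) = L (ψ f) (ψ g) := by
    intro f g
    simp only [hψdef]
    rw [L_add_left, L_add_right, L_add_right]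
    simp only [L_diagC_left, L_diagC_right, add_zero, zero_add]
    rw [L_diag, add_zero]
    have h := hD f g
    rw [← h, add_add_cancel_left]
  have hψinj : Function.Injective ψ := by
    intro f g hfg
    simp only [hψdef] at hfg
    have h2 := add_swap_eq hfg
    rw [← hadd, ← diagC_add] at h2
    have h3 : φ (f + g) = diagC (φ (f + g) x₀ x₀ + (f + g) x₀ x₀) := by
      have hs : φ (f + g) x₀ x₀ + (f + g) x₀ x₀
          = φ f x₀ x₀ + f x₀ x₀ + (φ g x₀ x₀ + g x₀ x₀) := by
        rw [hadd, IncidenceAlgebra.add_apply, IncidenceAlgebra.add_apply]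
        ring
      rw [hs, h2]
    have h4 := apply_congr h3 x₀ x₀
    rw [diagC_apply, if_pos rfl] at h4
    have h5 : (f + g) x₀ x₀ = 0 := z2cancel _ _ h4
    rcases z2cases (φ (f + g) x₀ x₀) with h0 | h1'
    · rw [h5, h0, add_zero, diagC_zero] at h3
      have h6 : f + g = 0 := hbij.1 (by rw [h3, phi_zero hadd hE])
      exact eq_iff_add_eq_zero.2 h6
    · rw [h5, h1', add_zero, diagC_one] at h3
      have h6 : f + g = p := hbij.1 (h3.trans hp1.symm)
      have h7 := apply_congr h6 x₀ x₀
      rw [h5, hx₀] at h7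
      exact absurd h7 (by decide)
  have hψbij : Function.Bijective ψ := Finite.injective_iff_bijective.1 hψinj
  set Eψ := Equiv.ofBijective ψ hψbij with hEψ
  have happ : ∀ t, ψ (Eψ.symm t) = t := fun t => Eψ.apply_symm_apply t
  have hsymmadd : ∀ a b, Eψ.symm (a + b) = Eψ.symm a + Eψ.symm b := by
    intro a b
    apply hψinj
    rw [hψadd, happ, happ, happ]
  -- the shift map τ
  set τ : IncidenceAlgebra (ZMod 2) X → IncidenceAlgebra (ZMod 2) X :=
    fun f => f + diagC (φ (Eψ.symm f) x₀ x₀ + (Eψ.symm f) x₀ x₀) with hτdef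
  have hτadd : ∀ f g, τ (f + g) = τ f + τ g := by
    intro f g
    simp only [hτdef]
    rw [hsymmadd, hcadd]
    abel
  have hτshift : ∀ f, τ f - f ∈ Set.center (IncidenceAlgebra (ZMod 2) X) := by
    intro f
    simp only [hτdef]
    rw [add_sub_cancel_left]
    exact diagC_center _
  have hphi_of_psi : ∀ u, ψ u + diagC (φ u x₀ x₀ + u x₀ x₀) = φ u := by
    intro u
    simp only [hψdef]
    rw [add_assoc, addself, add_zero]
  have hτeq : τ = φ ∘ Eψ.symm := by
    funext f
    simp only [hτdef, Function.comp]
    have h2 := hphi_of_psi (Eψ.symm f)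
    rw [happ] at h2
    exact h2
  have hτbij : Function.Bijective τ := by
    rw [hτeq]
    exact hbij.comp Eψ.symm.bijective
  have hcomp : φ = τ ∘ ψ := by
    funext g
    simp only [hτdef, Function.comp]
    have h1 : Eψ.symm (ψ g) = g := Eψ.symm_apply_apply g
    rw [h1]
    exact (hphi_of_psi g).symm
  refine ⟨τ, ψ, hτadd, hτshift, hτbij, hψadd, hψbij, ?_, hcomp⟩
  intro f g
  rw [subA (f * g) (g * f), subA (ψ f * ψ g) (ψ g * ψ f)]
  exact hψLie f g

end Main

end Stmt12Aux


/-- a bijective additive map on the incidence algebra of a finite connected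
poset over `ℤ₂` preserves idempotents iff it is the composition of a bijective shift map and
a Lie automorphism. -/
theorem stmt_12 {X : Type*} [PartialOrder X] [Fintype X] [LocallyFiniteOrder X] [DecidableEq X]
    (hconn : PosetConnected X)
    (φ : IncidenceAlgebra (ZMod 2) X → IncidenceAlgebra (ZMod 2) X)
    (hadd : ∀ f g, φ (f + g) = φ f + φ g)
    (hbij : Function.Bijective φ) :
    (∀ f : IncidenceAlgebra (ZMod 2) X, f * f = f → φ f * φ f = φ f) ↔
      ∃ τ ψ : IncidenceAlgebra (ZMod 2) X → IncidenceAlgebra (ZMod 2) X,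
        (∀ f g, τ (f + g) = τ f + τ g) ∧
        (∀ f, τ f - f ∈ Set.center (IncidenceAlgebra (ZMod 2) X)) ∧
        Function.Bijective τ ∧
        (∀ f g, ψ (f + g) = ψ f + ψ g) ∧
        Function.Bijective ψ ∧
        (∀ f g, ψ (f * g - g * f) = ψ f * ψ g - ψ g * ψ f) ∧
        φ = τ ∘ ψ := by
  constructor
  · intro hE
    rcases isEmpty_or_nonempty X with hX | hX
    · haveI : Subsingleton (IncidenceAlgebra (ZMod 2) X) :=
        ⟨fun a b => by ext x y _; exact hX.elim x⟩
      refine ⟨id, id, fun f g => rfl, ?_, Function.bijective_id, fun f g => rfl,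
        Function.bijective_id, fun f g => rfl, ?_⟩
      · intro f
        show f - f ∈ Set.center (IncidenceAlgebra (ZMod 2) X)
        rw [sub_self]
        exact Set.zero_mem_center
      · funext f
        exact Subsingleton.elim _ _
    · exact Stmt12Aux.forward_main hadd hE hconn hbij hX
  · rintro ⟨τ, ψ, hτadd, hτshift, hτbij, hψadd, hψbij, hψlie, hcomp⟩ f hf
    exact Stmt12Aux.backward hτshift hψbij hψlie hcomp f hf
end

section
/- Let R and S be rings such that S is both 2-torsion-free and 3-torsion-free, and let φ: R → S be an additive map that preserves tripotents (φ(a)³ = φ(a) whenever a³ = a). If a, b ∈ R are orthogonal tripotents (a³ = a, b³ = b, ab = ba = 0), then φ(a) and φ(b) are orthogonal tripotents of S, i.e. φ(a)φ(b) = φ(b)φ(a) = 0. -/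
/-- an additive tripotent preserver into a 2- and 3-torsion-free ring maps
orthogonal tripotents to orthogonal tripotents. -/
theorem stmt_13 {R S : Type*} [Ring R] [Ring S]
    (h2 : ∀ s : S, 2 • s = 0 → s = 0) (h3 : ∀ s : S, 3 • s = 0 → s = 0)
    (φ : R → S)
    (hadd : ∀ a b : R, φ (a + b) = φ a + φ b)
    (htri : ∀ a : R, a ^ 3 = a → (φ a) ^ 3 = φ a)
    {a b : R} (ha : a ^ 3 = a) (hb : b ^ 3 = b) (hab : a * b = 0) (hba : b * a = 0) :
    φ a * φ b = 0 ∧ φ b * φ a = 0 := by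
  set x := φ a with hxdef
  set y := φ b with hydef
  have hx : x ^ 3 = x := htri a ha
  have hy : y ^ 3 = y := htri b hb
  have habb : a * (b * b) = 0 := by rw [← mul_assoc, hab, zero_mul]
  -- a + b is a tripotent
  have habR : (a + b) ^ 3 = a + b := by
    have e : (a + b) ^ 3 = a ^ 3 + (a * (a * b) + (a * b) * a + (b * a) * a)
        + (a * (b * b) + b * (a * b) + b * (b * a)) + b ^ 3 := by noncomm_ring
    rw [e, hab, hba, ha, hb, habb]; simp
  -- a - b is a tripotent
  have hsubR : (a - b) ^ 3 = a - b := by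
    have e : (a - b) ^ 3 = a ^ 3 - (a * (a * b) + (a * b) * a + (b * a) * a)
        + (a * (b * b) + b * (a * b) + b * (b * a)) - b ^ 3 := by noncomm_ring
    rw [e, hab, hba, ha, hb, habb]; simp
  have hsum : (x + y) ^ 3 = x + y := by
    have := htri (a + b) habR
    rwa [hadd] at this
  have hφsub : φ (a - b) = x - y := by
    have h := hadd (a - b) b
    rw [sub_add_cancel, ← hxdef, ← hydef] at h
    exact eq_sub_of_add_eq h.symm
  have hdiff : (x - y) ^ 3 = x - y := by
    have := htri (a - b) hsubR
    rwa [hφsub] at this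
  -- Expand the two cubes
  set P : S := x ^ 2 * y + x * y * x + y * x ^ 2 with hP
  set Q : S := x * y ^ 2 + y * x * y + y ^ 2 * x with hQ
  have e1 : (x + y) ^ 3 = x ^ 3 + y ^ 3 + (P + Q) := by rw [hP, hQ]; noncomm_ring
  have e2 : (x - y) ^ 3 = x ^ 3 - y ^ 3 + (Q - P) := by rw [hP, hQ]; noncomm_ring
  have hPQ : P + Q = 0 := by
    have h := hsum
    rw [e1, hx, hy] at h
    have e : P + Q = (x + y + (P + Q)) - (x + y) := by abel
    rw [e, h, sub_self]
  have hQP : Q - P = 0 := by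
    have h := hdiff
    rw [e2, hx, hy] at h
    have e : Q - P = (x - y + (Q - P)) - (x - y) := by abel
    rw [e, h, sub_self]
  have hQ0 : Q = 0 := by
    refine h2 Q ?_
    have e : 2 • Q = (P + Q) + (Q - P) := by abel
    rw [e, hPQ, hQP, add_zero]
  have hP0 : P = 0 := by
    have e : P = (P + Q) - Q := by abel
    rw [e, hPQ, hQ0, sub_zero]
  -- multiply P = 0 by x on the left and on the right
  have hxP : x * y + x ^ 2 * y * x + x * y * x ^ 2 = 0 := by
    have e : x ^ 3 * y + x ^ 2 * y * x + x * y * x ^ 2 = x * P := by rw [hP]; noncomm_ring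
    rw [hx] at e
    rw [e, hP0, mul_zero]
  have hPx : x ^ 2 * y * x + x * y * x ^ 2 + y * x = 0 := by
    have e : x ^ 2 * y * x + x * y * x ^ 2 + y * x ^ 3 = P * x := by rw [hP]; noncomm_ring
    rw [hx] at e
    rw [e, hP0, zero_mul]
  have hcomm : x * y = y * x := by
    have e : x * y - y * x = (x * y + x ^ 2 * y * x + x * y * x ^ 2)
        - (x ^ 2 * y * x + x * y * x ^ 2 + y * x) := by abel
    rw [hxP, hPx, sub_self] at e
    exact sub_eq_zero.mp e
  have t1 : x * y * x = x ^ 2 * y := by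
    rw [mul_assoc, ← hcomm]; noncomm_ring
  have t2 : y * x ^ 2 = x ^ 2 * y := by
    rw [pow_two, ← mul_assoc, ← hcomm, t1]; noncomm_ring
  have hx2y : x ^ 2 * y = 0 := by
    refine h3 _ ?_
    have e : 3 • (x ^ 2 * y) = x ^ 2 * y + x * y * x + y * x ^ 2 := by rw [t1, t2]; abel
    rw [e, ← hP, hP0]
  have hxy : x * y = 0 := by
    have e : x * y = x * (x ^ 2 * y) := by rw [← mul_assoc, ← pow_succ']; rw [hx]
    rw [e, hx2y, mul_zero]
  exact ⟨hxy, by rw [← hcomm]; exact hxy⟩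
end

section
/- Let A and B be unital associative algebras over a commutative unital ring R and let φ: A → B be a Jordan triple isomorphism, i.e. a bijective R-linear map with φ(aba) = φ(a)φ(b)φ(a) for all a, b ∈ A. Then u = φ(1) is a central element of B satisfying u² = 1, and φ(ab + ba) = φ(a)·u·φ(b) + φ(b)·u·φ(a) for all a, b ∈ A. -/
/-- if `φ` is a Jordan triple isomorphism between unital associative algebras,
then `u = φ(1)` is central, `u² = 1`, and `φ(ab + ba) = φ(a)·u·φ(b) + φ(b)·u·φ(a)`. -/
theorem stmt_15 {R A B : Type*} [CommRing R] [Ring A] [Ring B] [Algebra R A] [Algebra R B]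
    (φ : A →ₗ[R] B)
    (hbij : Function.Bijective φ)
    (htriple : ∀ a b : A, φ (a * b * a) = φ a * φ b * φ a) :
    (∀ b : B, φ 1 * b = b * φ 1) ∧ φ 1 * φ 1 = 1 ∧
      ∀ a b : A, φ (a * b + b * a) = φ a * φ 1 * φ b + φ b * φ 1 * φ a := by
  obtain ⟨c, hc⟩ := hbij.2 1
  have h1 : ∀ a : A, φ a = φ 1 * φ a * φ 1 := by
    intro a
    have := htriple 1 a
    simpa using this
  have hu2 : φ 1 * φ 1 = 1 := by
    have h := h1 c
    rw [hc] at h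
    rw [mul_one] at h
    exact h.symm
  refine ⟨?_, hu2, ?_⟩
  · intro b
    obtain ⟨a, rfl⟩ := hbij.2 b
    calc φ 1 * φ a = φ 1 * (φ 1 * φ a * φ 1) := by rw [← h1]
      _ = (φ 1 * φ 1) * φ a * φ 1 := by noncomm_ring
      _ = φ a * φ 1 := by rw [hu2, one_mul]
  · intro a b
    have expand : (a + b) * 1 * (a + b) = a * 1 * a + (a * b + b * a) + b * 1 * b := by
      noncomm_ring
    have key := htriple (a + b) 1
    rw [expand, map_add, map_add, htriple a 1, htriple b 1] at key
    rw [map_add φ a b] at key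
    have : φ (a * b + b * a)
        = (φ a + φ b) * φ 1 * (φ a + φ b) - φ a * φ 1 * φ a - φ b * φ 1 * φ b := by
      rw [← key]; abel
    rw [this]; noncomm_ring
end

section
/- Let k ≥ 3 be an integer and F a field admitting a primitive (k−1)-th root of unity. Let A and B be associative F-algebras and φ: A → B an F-linear map preserving k-potents (φ(a)^k = φ(a) whenever a^k = a). If a, b ∈ A are orthogonal k-potents (a^k = a, b^k = b, ab = ba = 0), then φ(a) and φ(b) are commuting k-potents of B. If moreover char(F) does not divide k, then φ(a) and φ(b) are orthogonal: φ(a)φ(b) = φ(b)φ(a) = 0. -/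
open Polynomial Finset

/-- Orthogonal elements: binomial-free power expansion. -/
lemma orth_add_pow {A : Type*} [Ring A] {a c : A} (hac : a * c = 0) (hca : c * a = 0) :
    ∀ n : ℕ, (a + c) ^ (n + 1) = a ^ (n + 1) + c ^ (n + 1) := by
  intro n
  induction n with
  | zero => simp
  | succ n ih =>
      have h1 : a ^ (n + 1) * c = 0 := by
        rw [pow_succ, mul_assoc, hac, mul_zero]
      have h2 : c ^ (n + 1) * a = 0 := by
        rw [pow_succ, mul_assoc, hca, mul_zero]
      calc (a + c) ^ (n + 2) = (a + c) ^ (n + 1) * (a + c) := by rw [pow_succ]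
        _ = (a ^ (n + 1) + c ^ (n + 1)) * (a + c) := by rw [ih]
        _ = a ^ (n + 2) + c ^ (n + 2) + (a ^ (n + 1) * c + c ^ (n + 1) * a) := by
            noncomm_ring
        _ = a ^ (n + 2) + c ^ (n + 2) := by rw [h1, h2]; simp

/-- for `k ≥ 3` and a field with a primitive `(k−1)`-th root of unity, a linear
`k`-potent preserver maps orthogonal `k`-potents to commuting `k`-potents, and to orthogonal
ones when `char F ∤ k`. -/
theorem stmt_17 (k : ℕ) (hk : 3 ≤ k)
    {F : Type*} [Field F]
    (hroot : ∃ ε : F, ε ^ (k - 1) = 1 ∧ ∀ m : ℕ, 0 < m → m < k - 1 → ε ^ m ≠ 1)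
    {A B : Type*} [Ring A] [Ring B] [Algebra F A] [Algebra F B]
    (φ : A →ₗ[F] B)
    (hpres : ∀ a : A, a ^ k = a → (φ a) ^ k = φ a)
    {a b : A} (ha : a ^ k = a) (hb : b ^ k = b) (hab : a * b = 0) (hba : b * a = 0) :
    (φ a * φ b = φ b * φ a ∧ (φ a) ^ k = φ a ∧ (φ b) ^ k = φ b) ∧
      (¬ ringChar F ∣ k → φ a * φ b = 0 ∧ φ b * φ a = 0) := by
  obtain ⟨ε, hε1, hε2⟩ := hroot
  set x : B := φ a with hxdef
  set y : B := φ b with hydef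
  have hx : x ^ k = x := hpres a ha
  have hy : y ^ k = y := hpres b hb
  -- the polynomial p = C x + C y * X
  set p : Polynomial B := C x + C y * X with hpdef
  -- basic coefficient facts
  have hp0 : p.coeff 0 = x := by simp [hpdef]
  have hp1 : p.coeff 1 = y := by simp [hpdef]
  have hdegp : p.natDegree ≤ 1 := by
    refine le_trans (natDegree_add_le _ _) ?_
    simp only [natDegree_C, max_le_iff]
    exact ⟨Nat.zero_le 1, le_trans natDegree_mul_le (by simp [natDegree_X_le])⟩
  have hdegpn : ∀ n : ℕ, (p ^ n).natDegree ≤ n := fun n =>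
    le_trans natDegree_pow_le (by nlinarith [hdegp])
  have hdegq : (p ^ k - p).natDegree < k + 1 := by
    refine Nat.lt_succ_of_le (le_trans (natDegree_sub_le _ _) ?_)
    exact max_le (hdegpn k) (le_trans hdegp (by omega))
  -- recurrence for coefficients
  have hrec : ∀ n m : ℕ, (p ^ (n + 1)).coeff (m + 1)
      = (p ^ n).coeff (m + 1) * x + (p ^ n).coeff m * y := by
    intro n m
    have hsplit : p ^ (n + 1) = p ^ n * C x + (p ^ n * C y) * X := by
      rw [pow_succ, hpdef]; noncomm_ring
    rw [hsplit, coeff_add, coeff_mul_C, coeff_mul_X, coeff_mul_C]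
  have hc0 : ∀ n : ℕ, (p ^ n).coeff 0 = x ^ n := by
    intro n
    induction n with
    | zero => simp
    | succ n ih =>
        rw [pow_succ, mul_coeff_zero, ih, hp0, pow_succ]
  have hdiag : ∀ n : ℕ, (p ^ n).coeff n = y ^ n := by
    intro n
    induction n with
    | zero => simp
    | succ n ih =>
        rw [hrec n n, ih,
          coeff_eq_zero_of_natDegree_lt (lt_of_le_of_lt (hdegpn n) (Nat.lt_succ_self n)),
          zero_mul, zero_add, pow_succ]
  -- key evaluation identity
  have key : ∀ l : F, l ^ (k - 1) = 1 →
      ∑ m ∈ Finset.range (k + 1), l ^ m • (p ^ k - p).coeff m = 0 := by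
    intro l hl
    have hlk : l ^ k = l := by
      conv_lhs => rw [show k = (k - 1) + 1 by omega]
      rw [pow_succ, hl, one_mul]
    have hA : (a + l • b) ^ k = a + l • b := by
      have h1 : a * (l • b) = 0 := by rw [mul_smul_comm, hab, smul_zero]
      have h2 : (l • b) * a = 0 := by rw [smul_mul_assoc, hba, smul_zero]
      have h3 := orth_add_pow h1 h2 (k - 1)
      rw [show (k - 1) + 1 = k by omega] at h3
      rw [h3, ha, _root_.smul_pow, hlk, hb]
    have hB : (x + l • y) ^ k = x + l • y := by
      have := hpres _ hA
      rwa [map_add, map_smul] at this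
    set c : B := algebraMap F B l with hc
    have hcomm : ∀ b : B, Commute ((RingHom.id B) b) c := fun b =>
      (Algebra.commutes l b).symm
    set ψ : Polynomial B →+* B := eval₂RingHom' (RingHom.id B) c hcomm with hψ
    have hyc : y * c = l • y := by
      rw [Algebra.smul_def, ← Algebra.commutes l y]
    have hψp : ψ p = x + l • y := by
      have h4 : ψ p = ψ (C x) + ψ (C y) * ψ X := by rw [hpdef, map_add, map_mul]
      rw [h4]
      simp only [hψ, eval₂RingHom'_apply, eval₂_C, eval₂_X, RingHom.id_apply]
      rw [hyc]
    have hψq : ψ (p ^ k - p) = 0 := by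
      rw [map_sub, map_pow, hψp, hB, sub_self]
    have hterm : ∀ m : ℕ, l ^ m • (p ^ k - p).coeff m
        = (RingHom.id B) ((p ^ k - p).coeff m) * c ^ m := by
      intro m
      rw [RingHom.id_apply, hc, ← map_pow, ← Algebra.commutes (l ^ m), ← Algebra.smul_def]
    calc ∑ m ∈ Finset.range (k + 1), l ^ m • (p ^ k - p).coeff m
        = ∑ m ∈ Finset.range (k + 1), (RingHom.id B) ((p ^ k - p).coeff m) * c ^ m :=
          Finset.sum_congr rfl fun m _ => hterm m
      _ = eval₂ (RingHom.id B) c (p ^ k - p) := (eval₂_eq_sum_range' _ hdegq c).symm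
      _ = ψ (p ^ k - p) := rfl
      _ = 0 := hψq
  -- primitivity: ε^r = 1 ↔ (k-1) ∣ r
  have hdvd_iff : ∀ r : ℕ, ε ^ r = 1 ↔ (k - 1) ∣ r := by
    intro r
    constructor
    · intro h
      by_contra hnd
      have hm : r % (k - 1) ≠ 0 := fun h0 => hnd (Nat.dvd_of_mod_eq_zero h0)
      have h2 : ε ^ (r % (k - 1)) = 1 := by
        conv at h => lhs; rw [← Nat.div_add_mod r (k - 1), pow_add, pow_mul, hε1, one_pow,
          one_mul]
        exact h
      exact absurd h2 (hε2 _ (Nat.pos_of_ne_zero hm) (Nat.mod_lt _ (by omega)))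
    · rintro ⟨t, rfl⟩
      rw [pow_mul, hε1, one_pow]
  -- geometric sums
  have hgeo : ∀ r : ℕ, (∑ j ∈ Finset.range (k - 1), ε ^ (j * r))
      = if (k - 1) ∣ r then ((k - 1 : ℕ) : F) else 0 := by
    intro r
    have hpm : ∀ j : ℕ, ε ^ (j * r) = (ε ^ r) ^ j := fun j => by
      rw [← pow_mul, mul_comm]
    simp_rw [hpm]
    by_cases h : (k - 1) ∣ r
    · rw [if_pos h, (hdvd_iff r).mpr h]
      simp
    · rw [if_neg h, geom_sum_eq (fun h1 => h ((hdvd_iff r).mp h1)) (k - 1),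
        ← pow_mul, mul_comm, pow_mul, hε1, one_pow, sub_self, zero_div]
  -- (k-1 : F) ≠ 0
  have hk1F : ((k - 1 : ℕ) : F) ≠ 0 := by
    intro h0
    haveI hq : CharP F (ringChar F) := ringChar.charP F
    have hdvd : ringChar F ∣ (k - 1) := (CharP.cast_eq_zero_iff F _ (k - 1)).mp h0
    have hq0 : ringChar F ≠ 0 := by
      rintro hq0
      rw [hq0] at hdvd
      have := Nat.eq_zero_of_zero_dvd hdvd
      omega
    have hqp : (ringChar F).Prime := CharP.char_prime_of_ne_zero F hq0
    haveI : Fact (ringChar F).Prime := ⟨hqp⟩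
    set δ : F := ε ^ ((k - 1) / ringChar F) with hδ
    have hδq : δ ^ ringChar F = 1 := by
      rw [hδ, ← pow_mul, Nat.div_mul_cancel hdvd, hε1]
    have hδ1 : δ = 1 := by
      have h1 : (δ - 1) ^ ringChar F = 0 := by
        rw [sub_pow_char, hδq, one_pow, sub_self]
      have h2 := pow_eq_zero_iff hq0 |>.mp h1
      exact sub_eq_zero.mp h2
    have hlt : (k - 1) / ringChar F < k - 1 := Nat.div_lt_self (by omega) hqp.two_le
    have hpos : 0 < (k - 1) / ringChar F :=
      Nat.div_pos (Nat.le_of_dvd (by omega) hdvd) (Nat.pos_of_ne_zero hq0)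
    exact hε2 _ hpos hlt hδ1
  -- divisibility characterization for the index range
  have hdvd2 : ∀ m : ℕ, m < k + 1 → ((k - 1) ∣ ((k - 2) + m) ↔ (m = 1 ∨ m = k)) := by
    intro m hm
    constructor
    · rintro ⟨t, ht⟩
      rcases t with _ | _ | _ | t
      · simp at ht; omega
      · left; omega
      · right; omega
      · exfalso
        have h3 := Nat.mul_le_mul_left (k - 1) (show 3 ≤ t + 3 by omega)
        rw [← ht] at h3
        omega
    · rintro (rfl | rfl)
      · exact ⟨1, by omega⟩
      · exact ⟨2, by omega⟩
  -- character-sum extraction: coeff 1 + coeff k of q vanishes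
  have hsum0 : ∑ j ∈ Finset.range (k - 1),
      ε ^ (j * (k - 2)) • (∑ m ∈ Finset.range (k + 1),
        (ε ^ j) ^ m • (p ^ k - p).coeff m) = 0 := by
    refine Finset.sum_eq_zero fun j _ => ?_
    rw [key (ε ^ j) (by rw [← pow_mul, mul_comm, pow_mul, hε1, one_pow]), smul_zero]
  have hstep : ∑ j ∈ Finset.range (k - 1),
      ε ^ (j * (k - 2)) • (∑ m ∈ Finset.range (k + 1),
        (ε ^ j) ^ m • (p ^ k - p).coeff m)
      = ∑ m ∈ Finset.range (k + 1),
          (∑ j ∈ Finset.range (k - 1), ε ^ (j * ((k - 2) + m))) • (p ^ k - p).coeff m := by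
    calc ∑ j ∈ Finset.range (k - 1),
        ε ^ (j * (k - 2)) • (∑ m ∈ Finset.range (k + 1), (ε ^ j) ^ m • (p ^ k - p).coeff m)
        = ∑ j ∈ Finset.range (k - 1), ∑ m ∈ Finset.range (k + 1),
            ε ^ (j * ((k - 2) + m)) • (p ^ k - p).coeff m := by
          refine Finset.sum_congr rfl fun j _ => ?_
          rw [Finset.smul_sum]
          refine Finset.sum_congr rfl fun m _ => ?_
          rw [smul_smul, ← pow_mul, ← pow_add, ← Nat.mul_add]
      _ = ∑ m ∈ Finset.range (k + 1), ∑ j ∈ Finset.range (k - 1),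
            ε ^ (j * ((k - 2) + m)) • (p ^ k - p).coeff m := Finset.sum_comm
      _ = ∑ m ∈ Finset.range (k + 1),
            (∑ j ∈ Finset.range (k - 1), ε ^ (j * ((k - 2) + m))) • (p ^ k - p).coeff m := by
          refine Finset.sum_congr rfl fun m _ => ?_
          rw [Finset.sum_smul]
  have hsum2 : ((k - 1 : ℕ) : F) • ((p ^ k - p).coeff 1 + (p ^ k - p).coeff k) = 0 := by
    have h4 : ∑ m ∈ Finset.range (k + 1),
        (∑ j ∈ Finset.range (k - 1), ε ^ (j * ((k - 2) + m))) • (p ^ k - p).coeff m = 0 := by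
      rw [← hstep]; exact hsum0
    have h5 : ∑ m ∈ Finset.range (k + 1),
        (∑ j ∈ Finset.range (k - 1), ε ^ (j * ((k - 2) + m))) • (p ^ k - p).coeff m
        = ((k - 1 : ℕ) : F) • (p ^ k - p).coeff 1 + ((k - 1 : ℕ) : F) • (p ^ k - p).coeff k := by
      calc ∑ m ∈ Finset.range (k + 1),
          (∑ j ∈ Finset.range (k - 1), ε ^ (j * ((k - 2) + m))) • (p ^ k - p).coeff m
          = ∑ m ∈ Finset.range (k + 1),
              ((if m = 1 then ((k - 1 : ℕ) : F) else 0)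
                + (if m = k then ((k - 1 : ℕ) : F) else 0)) • (p ^ k - p).coeff m := by
            refine Finset.sum_congr rfl fun m hm => ?_
            rw [Finset.mem_range] at hm
            congr 1
            rw [hgeo, if_congr (hdvd2 m hm) rfl rfl]
            by_cases h1 : m = 1
            · subst h1
              rw [if_pos (Or.inl rfl), if_pos rfl, if_neg (by omega : ¬(1 : ℕ) = k), add_zero]
            · by_cases h2 : m = k
              · subst h2
                rw [if_pos (Or.inr rfl), if_neg h1, if_pos rfl, zero_add]
              · rw [if_neg (by tauto), if_neg h1, if_neg h2, add_zero]
        _ = (∑ m ∈ Finset.range (k + 1), (if m = 1 then ((k - 1 : ℕ) : F) else 0) • (p ^ k - p).coeff m)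
            + ∑ m ∈ Finset.range (k + 1), (if m = k then ((k - 1 : ℕ) : F) else 0) • (p ^ k - p).coeff m := by
            rw [← Finset.sum_add_distrib]
            exact Finset.sum_congr rfl fun m _ => add_smul _ _ _
        _ = ((k - 1 : ℕ) : F) • (p ^ k - p).coeff 1 + ((k - 1 : ℕ) : F) • (p ^ k - p).coeff k := by
            simp only [ite_smul, zero_smul]
            rw [Finset.sum_ite_eq' (Finset.range (k + 1)) 1
                (fun m => ((k - 1 : ℕ) : F) • (p ^ k - p).coeff m),
              Finset.sum_ite_eq' (Finset.range (k + 1)) k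
                (fun m => ((k - 1 : ℕ) : F) • (p ^ k - p).coeff m),
              if_pos (Finset.mem_range.mpr (by omega)),
              if_pos (Finset.mem_range.mpr (by omega))]
    rw [smul_add, ← h5]
    exact h4
  have h6 : (p ^ k - p).coeff 1 + (p ^ k - p).coeff k = 0 := by
    have h7 := congrArg (fun v => ((k - 1 : ℕ) : F)⁻¹ • v) hsum2
    simpa [smul_smul, inv_mul_cancel₀ hk1F] using h7
  have hq1 : (p ^ k - p).coeff 1 = (p ^ k).coeff 1 - y := by rw [coeff_sub, hp1]
  have hqk : (p ^ k - p).coeff k = y := by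
    rw [coeff_sub, hdiag k, hy,
      coeff_eq_zero_of_natDegree_lt (lt_of_le_of_lt hdegp (by omega)), sub_zero]
  have hf0 : (p ^ k).coeff 1 = 0 := by
    rw [hq1, hqk, sub_add_cancel] at h6
    exact h6
  -- commuting
  have hcommrec : ∀ n : ℕ, x * (p ^ n).coeff 1 - (p ^ n).coeff 1 * x
      = x ^ n * y - y * x ^ n := by
    intro n
    induction n with
    | zero => simp [Polynomial.coeff_one]
    | succ n ih =>
        rw [hrec n 0, hc0]
        have h2 : x * (p ^ n).coeff 1 * x - (p ^ n).coeff 1 * x * x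
            = x ^ n * y * x - y * x ^ n * x := by
          rw [← sub_mul, ih, sub_mul]
        calc x * ((p ^ n).coeff 1 * x + x ^ n * y) - ((p ^ n).coeff 1 * x + x ^ n * y) * x
            = (x * (p ^ n).coeff 1 * x - (p ^ n).coeff 1 * x * x)
              + (x * x ^ n * y - x ^ n * y * x) := by noncomm_ring
          _ = (x ^ n * y * x - y * x ^ n * x) + (x * x ^ n * y - x ^ n * y * x) := by rw [h2]
          _ = x * x ^ n * y - y * (x ^ n * x) := by noncomm_ring
          _ = x ^ (n + 1) * y - y * x ^ (n + 1) := by rw [← pow_succ', ← pow_succ]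
  have hxy : x * y = y * x := by
    have h8 : x * y - y * x = 0 := by
      have h9 := hcommrec k
      rw [hf0, hx] at h9
      simpa using h9.symm
    exact sub_eq_zero.mp h8
  refine ⟨⟨hxy, hx, hy⟩, ?_⟩
  -- orthogonality under char F ∤ k
  intro hchar
  have hkF : (k : F) ≠ 0 := fun h0 => hchar (ringChar.dvd h0)
  have hcx : ∀ n : ℕ, x ^ n * y = y * x ^ n := fun n => (Commute.pow_left hxy n).eq
  have hfn : ∀ n : ℕ, (p ^ (n + 1)).coeff 1 = (n + 1) • (y * x ^ n) := by
    intro n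
    induction n with
    | zero => rw [hrec 0 0]; simp [Polynomial.coeff_one]
    | succ n ih =>
        rw [hrec (n + 1) 0, ih, hc0, smul_mul_assoc, mul_assoc, ← pow_succ, hcx (n + 1)]
        rw [succ_nsmul (n := n + 1)]
  have hfk : (p ^ k).coeff 1 = k • (y * x ^ (k - 1)) := by
    have h10 := hfn (k - 1)
    rw [show (k - 1) + 1 = k by omega] at h10
    exact h10
  have h8 : (k : F) • (y * x ^ (k - 1)) = 0 := by
    rw [Nat.cast_smul_eq_nsmul, ← hfk, hf0]
  have h9 : y * x ^ (k - 1) = 0 := by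
    have h11 := congrArg (fun v => (k : F)⁻¹ • v) h8
    simpa [smul_smul, inv_mul_cancel₀ hkF] using h11
  have hyx : y * x = 0 := by
    have h12 : y * x ^ k = 0 := by
      rw [show k = (k - 1) + 1 by omega, pow_succ, ← mul_assoc, h9, zero_mul]
    rwa [hx] at h12
  exact ⟨by rw [hxy, hyx], hyx⟩
end

section
/- Let k ≥ 2 be an integer, X a locally finite poset, and F a field admitting a primitive (k−1)-th root of unity. Then f ∈ I(X,F) satisfies f^k = f if and only if f is conjugate to a diagonal element whose diagonal entries are either zero or (k−1)-th roots of unity; that is, if and only if there exist an invertible σ ∈ I(X,F) and a diagonal element d ∈ I(X,F) with d(x,x) = 0 or d(x,x)^{k−1} = 1 for every x ∈ X, such that f = σ d σ⁻¹. -/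
open Finset Polynomial



namespace Stmt19Aux

variable {F : Type*} [Field F] {X : Type*} [PartialOrder X] [LocallyFiniteOrder X] [DecidableEq X]

/-- right-inverse bare function -/
private def rFun (σ : IncidenceAlgebra F X) (b : X) : X → F
  | a =>
    if a = b then 1
    else
      -∑ x ∈ (Ioc a b).attach,
          let h := mem_Ioc.1 x.2
          have : (Icc (x : X) b).card < (Icc a b).card :=
            card_lt_card (Icc_ssubset_Icc_left (h.1.le.trans h.2) h.1 le_rfl)
          σ a x * rFun σ b x
termination_by a => (Icc a b).card

private lemma rFun_apply (σ : IncidenceAlgebra F X) (a b : X) :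
    rFun σ b a = if a = b then 1 else -∑ x ∈ (Ioc a b).attach, σ a x * rFun σ b x := by
  rw [rFun]

def rinv (σ : IncidenceAlgebra F X) : IncidenceAlgebra F X :=
  ⟨fun a b => rFun σ b a, fun a b h => by
    show rFun σ b a = 0
    rw [rFun_apply, if_neg (fun e : _ = _ => h (le_of_eq e)), Ioc_eq_empty (fun hlt => h hlt.le)]
    simp⟩

lemma rinv_apply (σ : IncidenceAlgebra F X) (a b : X) :
    rinv σ a b = if a = b then 1 else -∑ x ∈ Ioc a b, σ a x * rinv σ x b := by
  show rFun σ b a = _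
  rw [rFun_apply, sum_attach (Ioc a b) (fun x => σ a x * rFun σ b x)]
  rfl

lemma mul_rinv (σ : IncidenceAlgebra F X) (hσ : ∀ x, σ x x = 1) : σ * rinv σ = 1 := by
  ext a b hab
  rw [IncidenceAlgebra.mul_apply, Icc_eq_cons_Ioc hab, sum_cons, hσ a]
  rcases eq_or_ne a b with rfl | hne
  · rw [rinv_apply, if_pos rfl, Ioc_self, sum_empty, add_zero, IncidenceAlgebra.one_apply,
      if_pos rfl, one_mul]
  · rw [rinv_apply, if_neg hne, IncidenceAlgebra.one_apply, if_neg hne, one_mul,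
      neg_add_cancel]

/-- left-inverse bare function -/
private def lFun (σ : IncidenceAlgebra F X) (a : X) : X → F
  | b =>
    if a = b then 1
    else
      -∑ x ∈ (Ico a b).attach,
          let h := mem_Ico.1 x.2
          have : (Icc a (x : X)).card < (Icc a b).card :=
            card_lt_card (Icc_ssubset_Icc_right (h.1.trans h.2.le) le_rfl h.2)
          lFun σ a x * σ x b
termination_by b => (Icc a b).card

private lemma lFun_apply (σ : IncidenceAlgebra F X) (a b : X) :
    lFun σ a b = if a = b then 1 else -∑ x ∈ (Ico a b).attach, lFun σ a x * σ x b := by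
  rw [lFun]

def linv (σ : IncidenceAlgebra F X) : IncidenceAlgebra F X :=
  ⟨fun a b => lFun σ a b, fun a b h => by
    show lFun σ a b = 0
    rw [lFun_apply, if_neg (fun e : _ = _ => h (le_of_eq e)), Ico_eq_empty (fun hlt => h hlt.le)]
    simp⟩

lemma linv_apply (σ : IncidenceAlgebra F X) (a b : X) :
    linv σ a b = if a = b then 1 else -∑ x ∈ Ico a b, linv σ a x * σ x b := by
  show lFun σ a b = _
  rw [lFun_apply, sum_attach (Ico a b) (fun x => lFun σ a x * σ x b)]
  rfl

lemma linv_mul (σ : IncidenceAlgebra F X) (hσ : ∀ x, σ x x = 1) : linv σ * σ = 1 := by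
  ext a b hab
  rw [IncidenceAlgebra.mul_apply, Icc_eq_cons_Ico hab, sum_cons, hσ b, mul_one]
  rcases eq_or_ne a b with rfl | hne
  · rw [linv_apply, if_pos rfl, Ico_self, sum_empty, add_zero, IncidenceAlgebra.one_apply,
      if_pos rfl]
  · rw [linv_apply, if_neg hne, IncidenceAlgebra.one_apply, if_neg hne, neg_add_cancel]

/-- An element of the incidence algebra with all-ones diagonal is a unit. -/
def unitOfDiagOne (σ : IncidenceAlgebra F X) (hσ : ∀ x, σ x x = 1) :
    (IncidenceAlgebra F X)ˣ where
  val := σ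
  inv := rinv σ
  val_inv := mul_rinv σ hσ
  inv_val := by
    rw [← left_inv_eq_right_inv (linv_mul σ hσ) (mul_rinv σ hσ)]
    exact linv_mul σ hσ

end Stmt19Aux


namespace Stmt19Aux

variable {F : Type*} [Field F] {X : Type*} [PartialOrder X] [LocallyFiniteOrder X] [DecidableEq X]

/-- evaluation at a diagonal point, as an algebra homomorphism -/
def evalDiag (x : X) : IncidenceAlgebra F X →ₐ[F] F where
  toFun g := g x x
  map_one' := by simp
  map_mul' g h := by
    show (g * h) x x = g x x * h x x
    rw [IncidenceAlgebra.mul_apply, Icc_self, sum_singleton]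
  map_zero' := rfl
  map_add' g h := rfl
  commutes' c := by
    simp [Algebra.algebraMap_eq_smul_one, IncidenceAlgebra.constSMul_apply]

@[simp] lemma evalDiag_apply (x : X) (g : IncidenceAlgebra F X) : evalDiag x g = g x x := rfl

/-- diagonal element of the incidence algebra -/
def diag (g : X → F) : IncidenceAlgebra F X :=
  ⟨fun x y => if x = y then g x else 0, fun x y h => if_neg (fun e : _ = _ => h (le_of_eq e))⟩

@[simp] lemma diag_apply (g : X → F) (x y : X) : diag g x y = if x = y then g x else 0 := rfl

lemma mul_offdiag {p q : IncidenceAlgebra F X} (hp : ∀ x y, x ≠ y → p x y = 0)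
    (hq : ∀ x y, x ≠ y → q x y = 0) : ∀ x y, x ≠ y → (p * q) x y = 0 := by
  intro x y hxy
  rw [IncidenceAlgebra.mul_apply]
  refine sum_eq_zero fun z hz => ?_
  rcases eq_or_ne x z with rfl | hxz
  · rw [hq x y hxy, mul_zero]
  · rw [hp x z hxz, zero_mul]

lemma pow_offdiag {p : IncidenceAlgebra F X} (hp : ∀ x y, x ≠ y → p x y = 0) (m : ℕ) :
    ∀ x y, x ≠ y → (p ^ m) x y = 0 := by
  induction m with
  | zero =>
      intro x y hxy
      rw [pow_zero, IncidenceAlgebra.one_apply, if_neg hxy]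
  | succ m ih => rw [pow_succ]; exact mul_offdiag ih hp

/-- a diagonal element with entries satisfying `a^k = a` satisfies `d^k = d`. -/
lemma diag_pow_eq {d : IncidenceAlgebra F X} (hoff : ∀ x y, x ≠ y → d x y = 0) (k : ℕ)
    (hdiag : ∀ x, (d x x) ^ k = d x x) : d ^ k = d := by
  ext x y hxy
  rcases eq_or_ne x y with rfl | hne
  · have h := map_pow (evalDiag x) d k
    simp only [evalDiag_apply] at h
    rw [h]
    exact hdiag x
  · rw [pow_offdiag hoff k x y hne, hoff x y hne]

lemma conj_pow_units {R : Type*} [Ring R] (u : Rˣ) (a : R) (m : ℕ) :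
    ((u : R) * a * (↑u⁻¹ : R)) ^ m = (u : R) * a ^ m * (↑u⁻¹ : R) := by
  have key : ∀ m : ℕ, ((u : R) * a * (↑u⁻¹ : R)) ^ m * (u : R) = (u : R) * a ^ m := by
    intro m
    induction m with
    | zero => rw [pow_zero, pow_zero, one_mul, mul_one]
    | succ m ih =>
        rw [pow_succ, pow_succ, mul_assoc, Units.inv_mul_cancel_right, ← mul_assoc, ih,
          mul_assoc]
  have := congrArg (· * (↑u⁻¹ : R)) (key m)
  simpa only [Units.mul_inv_cancel_right] using this

end Stmt19Aux


namespace Stmt19Aux2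

variable {F : Type*} [Field F]

lemma prod_X_sub_C_eq (k n : ℕ) (hk : k = n + 1) (hn : 0 < n) {ε : F}
    (hprim : IsPrimitiveRoot ε n) (r : ℕ → F) (hr0 : r 0 = 0) (hrs : ∀ i, r (i + 1) = ε ^ i) :
    ∏ j ∈ range k, (X - C (r j)) = X ^ k - X := by
  classical
  subst hk
  have himg : Polynomial.nthRootsFinset n (1 : F) = (range n).image (ε ^ ·) := by
    symm
    apply Finset.eq_of_subset_of_card_le
    · intro z hz
      simp only [mem_image] at hz
      obtain ⟨j, hj, rfl⟩ := hz
      exact (Polynomial.mem_nthRootsFinset hn (1 : F)).2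
        (by rw [← pow_mul, mul_comm, pow_mul, hprim.pow_eq_one, one_pow])
    · rw [hprim.card_nthRootsFinset, card_image_of_injOn hprim.injOn_pow, card_range]
  have h1 : (X : F[X]) ^ n - 1 = ∏ j ∈ range n, (X - C (ε ^ j)) := by
    rw [Polynomial.X_pow_sub_one_eq_prod hn hprim, himg, prod_image]
    intro a ha b hb hab
    exact hprim.injOn_pow (mem_coe.2 ha) (mem_coe.2 hb) hab
  rw [prod_range_succ']
  simp only [hrs, hr0, map_zero, sub_zero]
  rw [← h1]
  ring

lemma r_injOn (k n : ℕ) (hk : k = n + 1) (hn : 0 < n) {ε : F}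
    (hprim : IsPrimitiveRoot ε n) (r : ℕ → F) (hr0 : r 0 = 0) (hrs : ∀ i, r (i + 1) = ε ^ i) :
    Set.InjOn r (range k) := by
  have hε0 : (ε : F) ≠ 0 := hprim.ne_zero hn.ne'
  intro i hi j hj hij
  simp only [coe_range, Set.mem_Iio] at hi hj
  match i, j with
  | 0, 0 => rfl
  | 0, j + 1 =>
      rw [hr0, hrs] at hij
      exact absurd hij.symm (pow_ne_zero _ hε0)
  | i + 1, 0 =>
      rw [hr0, hrs] at hij
      exact absurd hij (pow_ne_zero _ hε0)
  | i + 1, j + 1 =>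
      rw [hrs, hrs] at hij
      have := hprim.pow_inj (by omega) (by omega) hij
      omega

lemma exists_root_eq (k n : ℕ) (hk : k = n + 1) (hn : 0 < n) {ε : F}
    (hprim : IsPrimitiveRoot ε n) (r : ℕ → F) (hr0 : r 0 = 0) (hrs : ∀ i, r (i + 1) = ε ^ i)
    {a : F} (ha : a ^ k = a) : ∃ i ∈ range k, r i = a := by
  rcases eq_or_ne a 0 with rfl | h0
  · exact ⟨0, mem_range.2 (by omega), hr0⟩
  · have h1 : a ^ n = 1 := by
      have h2 : a ^ n * a = 1 * a := by rw [one_mul, ← pow_succ, ← hk, ha]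
      exact mul_right_cancel₀ h0 h2
    haveI : NeZero n := ⟨hn.ne'⟩
    obtain ⟨i, hi, hia⟩ := hprim.eq_pow_of_pow_eq_one h1
    exact ⟨i + 1, mem_range.2 (by omega), by rw [hrs]; exact hia⟩

variable {α : Type*} [PartialOrder α] [LocallyFiniteOrder α] [DecidableEq α]

lemma mul_aeval_basis (k : ℕ) (r : ℕ → F)
    (hprod : ∏ j ∈ range k, (X - C (r j)) = X ^ k - X)
    {g : IncidenceAlgebra F α} (hg : g ^ k = g) {i : ℕ} (hi : i ∈ range k) :
    g * aeval g (Lagrange.basis (range k) r i) =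
      r i • aeval g (Lagrange.basis (range k) r i) := by
  set c : F := ∏ j ∈ (range k).erase i, (r i - r j)⁻¹ with hc
  have hpoly : (X - C (r i)) * Lagrange.basis (range k) r i = C c * (X ^ k - X) := by
    rw [← hprod]
    simp only [Lagrange.basis, Lagrange.basisDivisor]
    rw [prod_mul_distrib, ← map_prod, ← hc, ← mul_assoc, mul_comm (X - C (r i)) (C c),
      mul_assoc, mul_prod_erase (range k) (fun j => X - C (r j)) hi]
  have h := congrArg (aeval g) hpoly
  simp only [map_mul, map_sub, aeval_X, aeval_C, map_pow] at h
  rw [hg, sub_self, mul_zero] at h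
  rw [sub_mul, sub_eq_zero] at h
  rw [h, ← Algebra.smul_def]

lemma aeval_mul_self (p : F[X]) (g : IncidenceAlgebra F α) :
    aeval g p * g = g * aeval g p := by
  calc aeval g p * g = aeval g (p * X) := by rw [map_mul, aeval_X]
    _ = aeval g (X * p) := by rw [mul_comm]
    _ = g * aeval g p := by rw [map_mul, aeval_X]

end Stmt19Aux2

open Finset Polynomial Stmt19Aux Stmt19Aux2

open IncidenceAlgebra


/-- over a field with a primitive `(k−1)`-th root of unity, `f^k = f` in the
incidence algebra of a locally finite poset iff `f` is conjugate to a diagonal element whose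
entries are zero or `(k−1)`-th roots of unity. -/
theorem stmt_19 (k : ℕ) (hk : 2 ≤ k)
    {X : Type*} [PartialOrder X] [LocallyFiniteOrder X] [DecidableEq X]
    {F : Type*} [Field F]
    (hroot : ∃ ε : F, ε ^ (k - 1) = 1 ∧ ∀ m : ℕ, 0 < m → m < k - 1 → ε ^ m ≠ 1)
    (f : IncidenceAlgebra F X) :
    f ^ k = f ↔
      ∃ (σ : (IncidenceAlgebra F X)ˣ) (d : IncidenceAlgebra F X),
        (∀ x y : X, x ≠ y → d x y = 0) ∧
        (∀ x : X, d x x = 0 ∨ (d x x) ^ (k - 1) = 1) ∧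
        f = (σ : IncidenceAlgebra F X) * d * ((σ⁻¹ : _) : IncidenceAlgebra F X) := by
  classical
  obtain ⟨ε, hε1, hεm⟩ := hroot
  have hn : 0 < k - 1 := by omega
  have hk1 : k = (k - 1) + 1 := by omega
  have hprim : IsPrimitiveRoot ε (k - 1) := by
    refine ⟨hε1, fun l hl => ?_⟩
    rcases Nat.eq_zero_or_pos (l % (k - 1)) with h0 | hpos
    · exact Nat.dvd_of_mod_eq_zero h0
    · exfalso
      apply hεm (l % (k - 1)) hpos (Nat.mod_lt l hn)
      calc ε ^ (l % (k - 1)) = ε ^ (l % (k - 1)) * (ε ^ (k - 1)) ^ (l / (k - 1)) := by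
            rw [hε1, one_pow, mul_one]
        _ = ε ^ (l % (k - 1) + (k - 1) * (l / (k - 1))) := by rw [← pow_mul, ← pow_add]
        _ = ε ^ l := by rw [Nat.mod_add_div]
        _ = 1 := hl
  set r : ℕ → F := fun i => if i = 0 then 0 else ε ^ (i - 1) with hr
  have hr0 : r 0 = 0 := rfl
  have hrs : ∀ i, r (i + 1) = ε ^ i := fun i => by simp [hr]
  have hprod := prod_X_sub_C_eq k (k - 1) hk1 hn hprim r hr0 hrs
  have hinj : Set.InjOn r (range k) := r_injOn k (k - 1) hk1 hn hprim r hr0 hrs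
  constructor
  · intro hf
    have hfd : ∀ x : X, (f x x) ^ k = f x x := by
      intro x
      have h := map_pow (evalDiag x) f k
      simp only [evalDiag_apply] at h
      rw [← h, hf]
    set d : IncidenceAlgebra F X := diag (fun x => f x x) with hd
    have hdoff : ∀ x y : X, x ≠ y → d x y = 0 := fun x y hxy => if_neg hxy
    have hddiag : ∀ x : X, d x x = f x x := fun x => if_pos rfl
    have hdk : d ^ k = d := diag_pow_eq hdoff k (fun x => by rw [hddiag]; exact hfd x)
    set B : ℕ → Polynomial F := fun i => Lagrange.basis (range k) r i with hB
    set σ : IncidenceAlgebra F X := ∑ i ∈ range k, aeval f (B i) * aeval d (B i) with hσ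
    have hev : ∀ (g : IncidenceAlgebra F X) (i : ℕ) (x : X),
        (aeval g (B i)) x x = eval (g x x) (B i) := by
      intro g i x
      have h := aeval_algHom_apply (evalDiag x) g (B i)
      simp only [evalDiag_apply] at h
      rw [← h]
      exact DFunLike.congr_fun (coe_aeval_eq_evalRingHom (g x x)) (B i)
    have hσdiag : ∀ x : X, σ x x = 1 := by
      intro x
      obtain ⟨i0, hi0, hri0⟩ := exists_root_eq k (k - 1) hk1 hn hprim r hr0 hrs (hfd x)
      have hx : σ x x = ∑ i ∈ range k, (aeval f (B i)) x x * (aeval d (B i)) x x := by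
        have h := map_sum (evalDiag x) (fun i => aeval f (B i) * aeval d (B i)) (range k)
        simpa only [evalDiag_apply, map_mul, ← hσ] using h
      rw [hx]
      have hterm : ∀ i ∈ range k,
          (aeval f (B i)) x x * (aeval d (B i)) x x = if i = i0 then 1 else 0 := by
        intro i hi
        rw [hev, hev, hddiag, ← hri0]
        rcases eq_or_ne i i0 with rfl | hne
        · rw [if_pos rfl, Lagrange.eval_basis_self hinj hi0, mul_one]
        · rw [if_neg hne, Lagrange.eval_basis_of_ne hne hi0, mul_zero]
      rw [sum_congr rfl hterm, sum_ite_eq' (range k) i0 (fun _ => (1 : F)), if_pos hi0]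
    have hcomm : f * σ = σ * d := by
      rw [hσ, mul_sum, sum_mul]
      refine sum_congr rfl fun i hi => ?_
      have h1 : f * aeval f (B i) = r i • aeval f (B i) := mul_aeval_basis k r hprod hf hi
      have h2 : d * aeval d (B i) = r i • aeval d (B i) := mul_aeval_basis k r hprod hdk hi
      have h3 : aeval d (B i) * d = d * aeval d (B i) := aeval_mul_self (B i) d
      calc f * (aeval f (B i) * aeval d (B i))
          = (f * aeval f (B i)) * aeval d (B i) := by rw [mul_assoc]
        _ = (r i • aeval f (B i)) * aeval d (B i) := by rw [h1]
        _ = r i • (aeval f (B i) * aeval d (B i)) := smul_mul_assoc _ _ _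
        _ = aeval f (B i) * (r i • aeval d (B i)) := (mul_smul_comm _ _ _).symm
        _ = aeval f (B i) * (d * aeval d (B i)) := by rw [h2]
        _ = aeval f (B i) * (aeval d (B i) * d) := by rw [h3]
        _ = aeval f (B i) * aeval d (B i) * d := by rw [mul_assoc]
    refine ⟨unitOfDiagOne σ hσdiag, d, hdoff, ?_, ?_⟩
    · intro x
      rcases eq_or_ne (f x x) 0 with h0 | h0
      · left; rw [hddiag, h0]
      · right
        rw [hddiag]
        have h2 : f x x ^ (k - 1) * f x x = 1 * f x x := by
          rw [one_mul, ← pow_succ, ← hk1, hfd x]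
        exact mul_right_cancel₀ h0 h2
    · have hcv : ((unitOfDiagOne σ hσdiag : (IncidenceAlgebra F X)ˣ) : IncidenceAlgebra F X)
          = σ := rfl
      calc f = f * ↑(unitOfDiagOne σ hσdiag) * ↑(unitOfDiagOne σ hσdiag)⁻¹ := by
            rw [mul_assoc, Units.mul_inv, mul_one]
        _ = ↑(unitOfDiagOne σ hσdiag) * d * ↑(unitOfDiagOne σ hσdiag)⁻¹ := by
            rw [hcv, hcomm]
  · rintro ⟨σ, d, hdoff, hdroot, rfl⟩
    have hdk : d ^ k = d := by
      refine diag_pow_eq hdoff k (fun x => ?_)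
      rcases hdroot x with h0 | h1
      · rw [h0, zero_pow (by omega : k ≠ 0)]
      · calc d x x ^ k = d x x ^ (k - 1) * d x x := by rw [← pow_succ, ← hk1]
          _ = d x x := by rw [h1, one_mul]
    rw [conj_pow_units, hdk]
end
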